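/- Let Γ ⊂ ℝ^N be an embedded network with a Hamiltonian (H_γ) and a flux limiter (c_x). Let x ∈ V, γ ∈ Γ_x, and let ξ : [a,b] → ℝ^N be an absolutely continuous curve with ξ(a) = ξ(b), ξ([a,b]) ⊆ γ([0,1]), and ξ([a,b]) ∩ (V ∖ {x}) = ∅. Then ∫_a^b L(ξ(τ),ξ̇(τ)) dτ ≥ c_x (b − a). -/

import Mathlib

open Set MeasureTheory Filter Topology
open scoped Classical

noncomputable section

/-! #### Absolutely continuous curves and extended-real integrals -/

/-- `ξ` is absolutely continuous on `[a,b]`, with `ξ'` as a choice of its a.e. derivative: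
`ξ'` is integrable on `[a,b]` and the fundamental theorem of calculus holds. -/
def IsACDerivOn {E : Type*} [NormedAddCommGroup E] [NormedSpace ℝ E]
    (a b : ℝ) (ξ ξ' : ℝ → E) : Prop :=
  IntegrableOn ξ' (Icc a b) ∧ ∀ t ∈ Icc a b, ξ t = ξ a + ∫ τ in a..t, ξ' τ

/-- Extended-real integral on `[a,b]`, suited to integrands which are bounded from below:
it is the Bochner integral when the integrand is a.e. finite and integrable, `+∞` otherwise. -/
def eIntegral (a b : ℝ) (f : ℝ → EReal) : EReal :=
  if IntegrableOn (fun τ => (f τ).toReal) (Icc a b) ∧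
      (∀ᵐ τ ∂(volume.restrict (Icc a b)), f τ ≠ ⊤ ∧ f τ ≠ ⊥) then
    (((∫ τ in Icc a b, (f τ).toReal) : ℝ) : EReal)
  else ⊤

/-! #### One-dimensional Hamiltonians on `[0,1] × ℝ` -/

/-- Standing assumptions on a Hamiltonian `H : [0,1] × ℝ → ℝ`: continuity, convexity in the
momentum variable, and superlinearity in the momentum variable, uniformly in the state. -/
structure IsHamiltonian (H : ℝ → ℝ → ℝ) : Prop where
  cont : ContinuousOn (fun p : ℝ × ℝ => H p.1 p.2) (Icc 0 1 ×ˢ univ)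
  convex : ∀ s ∈ Icc (0:ℝ) 1, ConvexOn ℝ univ fun μ => H s μ
  superlinear : ∀ A : ℝ, ∃ R : ℝ, ∀ s ∈ Icc (0:ℝ) 1, ∀ μ : ℝ, R ≤ |μ| → A * |μ| ≤ H s μ

/-- The Lagrangian associated to `H` via the Fenchel transform:
`L(s,λ) = sup_μ (λ μ - H(s,μ))`. -/
def Lagr (H : ℝ → ℝ → ℝ) (s lam : ℝ) : ℝ :=
  sSup (range fun μ => lam * μ - H s μ)

/-- `c_H = - max_{s ∈ [0,1]} min_{μ ∈ ℝ} H(s,μ)`. -/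
def cHam (H : ℝ → ℝ → ℝ) : ℝ :=
  - sSup ((fun s => sInf (range fun μ => H s μ)) '' Icc 0 1)

/-- The modified Lagrangian `L̄`, equal to `L` for `s ∉ {0,1}` and to
`L(s,λ) + c - L(s,0)` for `s ∈ {0,1}`. -/
def Lbar (H : ℝ → ℝ → ℝ) (c : ℝ) (s lam : ℝ) : ℝ :=
  if s = 0 ∨ s = 1 then Lagr H s lam + c - Lagr H s 0 else Lagr H s lam

/-- The extension `F` of `L̄` to `ℝ × ℝ` obtained by successive reflections:
`F(s,λ) = L̄(s-n,λ)` on `(n,n+1]` for even `n ∈ ℕ`, `F(s,λ) = L̄(1-s+n,λ)` on `(n,n+1]`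
for odd `n ∈ ℕ`, `F(s,λ) = L̄(-s-n,λ)` on `(-n-1,-n]` for even `n ∈ ℕ` and
`F(s,λ) = L̄(s+n+1,λ)` on `(-n-1,-n]` for odd `n ∈ ℕ`; equivalently,
`F(s,λ) = L̄(dist(s, 2ℤ), λ)`. -/
def Fext (H : ℝ → ℝ → ℝ) (c : ℝ) (s lam : ℝ) : ℝ :=
  Lbar H c |s - 2 * (round (s / 2) : ℝ)| lam

/-! #### Viscosity solutions on `Q = (0,1) × (0,+∞)` -/

/-- `Q = (0,1) × (0,+∞)`, first coordinate the state `s`, second the time `t`. -/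
def Qset : Set (ℝ × ℝ) := Ioo 0 1 ×ˢ Ioi 0

/-- `∂Q = ([0,1] × {0}) ∪ ({0,1} × [0,+∞))`. -/
def bdQ : Set (ℝ × ℝ) := (Icc 0 1 ×ˢ {0}) ∪ (({0, 1} : Set ℝ) ×ˢ Ici 0)

/-- `∂⁻Q = ([0,1] × {0}) ∪ ({0} × [0,+∞))`. -/
def bdQminus : Set (ℝ × ℝ) := (Icc 0 1 ×ˢ {0}) ∪ (({0} : Set ℝ) ×ˢ Ici 0)

/-- Viscosity subsolution of `U_t + H(s,U') = 0` in `Q`. -/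
def IsViscSubsol (H : ℝ → ℝ → ℝ) (U : ℝ → ℝ → ℝ) : Prop :=
  ∀ Φ : ℝ → ℝ → ℝ, ContDiff ℝ 1 (fun p : ℝ × ℝ => Φ p.1 p.2) →
    ∀ p : ℝ × ℝ, p ∈ Qset →
      IsLocalMaxOn (fun q : ℝ × ℝ => U q.1 q.2 - Φ q.1 q.2) Qset p →
      deriv (fun t => Φ p.1 t) p.2 + H p.1 (deriv (fun s => Φ s p.2) p.1) ≤ 0

/-- Viscosity supersolution of `U_t + H(s,U') = 0` in `Q`. -/
def IsViscSupersol (H : ℝ → ℝ → ℝ) (U : ℝ → ℝ → ℝ) : Prop :=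
  ∀ Φ : ℝ → ℝ → ℝ, ContDiff ℝ 1 (fun p : ℝ × ℝ => Φ p.1 p.2) →
    ∀ p : ℝ × ℝ, p ∈ Qset →
      IsLocalMinOn (fun q : ℝ × ℝ => U q.1 q.2 - Φ q.1 q.2) Qset p →
      0 ≤ deriv (fun t => Φ p.1 t) p.2 + H p.1 (deriv (fun s => Φ s p.2) p.1)

/-- The Lax–Oleinik value function associated to a boundary datum `g` on `∂Q`:
`V(s,t) = inf { g(s₀,t₀) + ∫_{t₀}^t L(η,η̇) dτ }`, the infimum being over points
`(s₀,t₀) ∈ ∂Q` with `t₀ ≤ t` (where `t₀ = t` is only allowed for the trivial curve) and over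
absolutely continuous curves `η : [t₀,t] → [0,1]` with `η(t₀) = s₀`, `η(t) = s`. -/
def valOn (B : Set (ℝ × ℝ)) (H : ℝ → ℝ → ℝ) (g : ℝ → ℝ → ℝ) (s t : ℝ) : ℝ :=
  sInf {v : ℝ | ∃ s₀ t₀ : ℝ, (s₀, t₀) ∈ B ∧ (t₀ < t ∨ (t₀ = t ∧ s₀ = s)) ∧
    ∃ η η' : ℝ → ℝ, IsACDerivOn t₀ t η η' ∧ (∀ τ ∈ Icc t₀ t, η τ ∈ Icc (0:ℝ) 1) ∧
      η t₀ = s₀ ∧ η t = s ∧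
      (v : EReal) = ((g s₀ t₀ : ℝ) : EReal) +
        eIntegral t₀ t fun τ => ((Lagr H (η τ) (η' τ) : ℝ) : EReal)}

/-- Value function for the boundary datum on `∂Q`. -/
def valV (H : ℝ → ℝ → ℝ) (g : ℝ → ℝ → ℝ) : ℝ → ℝ → ℝ := valOn bdQ H g

/-- Value function for the boundary datum on `∂⁻Q`. -/
def valW (H : ℝ → ℝ → ℝ) (g : ℝ → ℝ → ℝ) : ℝ → ℝ → ℝ := valOn bdQminus H g

/-! #### Embedded networks in `ℝ^N` -/

/-- Euclidean space `ℝ^N`. -/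
abbrev EucN (N : ℕ) := EuclideanSpace ℝ (Fin N)

/-- A regular simple arc in `ℝ^N`, parametrized on `[0,1]`: a `C¹` injective curve with
nowhere vanishing (one-sided at the endpoints) derivative. -/
structure Arc (N : ℕ) where
  toFun : ℝ → EucN N
  deriv : ℝ → EucN N
  hasDeriv : ∀ s ∈ Icc (0:ℝ) 1, HasDerivWithinAt toFun (deriv s) (Icc 0 1) s
  contDeriv : ContinuousOn deriv (Icc 0 1)
  deriv_ne_zero : ∀ s ∈ Icc (0:ℝ) 1, deriv s ≠ 0
  injOn : InjOn toFun (Icc 0 1)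

/-- `γ'` is the inverse parametrization of `γ`: `γ'(s) = γ(1-s)` on `[0,1]`. -/
def Arc.IsInverse {N : ℕ} (γ γ' : Arc N) : Prop :=
  ∀ s ∈ Icc (0:ℝ) 1, γ'.toFun s = γ.toFun (1 - s)

/-- An embedded network in `ℝ^N`: a finite, connected collection of arcs, closed under
inverse parametrization, such that two arcs which are not inverse to each other meet only at
endpoints, vertices (endpoints of arcs) never lie in the interior of an arc, and no arc is a
loop (this is subsumed by injectivity of the arcs on `[0,1]`). -/
structure EmbNetwork (N : ℕ) where
  arcs : Set (Arc N)
  finite : arcs.Finite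
  nonempty : arcs.Nonempty
  closed_inv : ∀ γ ∈ arcs, ∃ γ' ∈ arcs, Arc.IsInverse γ γ'
  disj : ∀ γ ∈ arcs, ∀ γ' ∈ arcs, γ ≠ γ' → ¬ Arc.IsInverse γ γ' →
    (γ.toFun '' Ioo 0 1) ∩ (γ'.toFun '' Icc 0 1) = ∅
  no_vertex_inside : ∀ γ ∈ arcs, ∀ γ' ∈ arcs, ∀ s ∈ Ioo (0:ℝ) 1,
    γ.toFun s ≠ γ'.toFun 0 ∧ γ.toFun s ≠ γ'.toFun 1
  connected : IsConnected (⋃ γ ∈ arcs, γ.toFun '' Icc 0 1)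

namespace EmbNetwork

variable {N : ℕ}

/-- The support `Γ ⊆ ℝ^N` of the network. -/
def carrier (Γ : EmbNetwork N) : Set (EucN N) := ⋃ γ ∈ Γ.arcs, γ.toFun '' Icc 0 1

/-- The set `V` of vertices of the network. -/
def V (Γ : EmbNetwork N) : Set (EucN N) :=
  {x | ∃ γ ∈ Γ.arcs, γ.toFun 0 = x ∨ γ.toFun 1 = x}

/-- The geodesic distance on `Γ` induced by the Euclidean metric: the infimum of the
euclidean lengths of absolutely continuous curves joining `x` to `y` within `Γ`. -/
def geoDist (Γ : EmbNetwork N) (x y : EucN N) : ℝ :=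
  sInf {l : ℝ | ∃ ξ ξ' : ℝ → EucN N, IsACDerivOn 0 1 ξ ξ' ∧
    (∀ t ∈ Icc (0:ℝ) 1, ξ t ∈ Γ.carrier) ∧ ξ 0 = x ∧ ξ 1 = y ∧
    l = ∫ τ in Icc (0:ℝ) 1, ‖ξ' τ‖}

end EmbNetwork

/-! #### Hamiltonians, flux limiters and the Lagrangian on a network -/

/-- A Hamiltonian on the network `Γ`: a family of Hamiltonians indexed by the arcs, each
satisfying the standing assumptions, with the compatibility condition
`H_{γ̃}(s,μ) = H_γ(1-s,-μ)` for inverse arcs. -/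
structure IsNetworkHamiltonian {N : ℕ} (Γ : EmbNetwork N) (H : Arc N → ℝ → ℝ → ℝ) : Prop where
  isHam : ∀ γ ∈ Γ.arcs, IsHamiltonian (H γ)
  compat : ∀ γ ∈ Γ.arcs, ∀ γ' ∈ Γ.arcs, Arc.IsInverse γ γ' →
    ∀ s ∈ Icc (0:ℝ) 1, ∀ μ : ℝ, H γ' s μ = H γ (1 - s) (-μ)

/-- A flux limiter: constants `c x` for the vertices with `c x ≤ min_{γ ∈ Γ_x} c_γ`. -/
def IsFluxLimiter {N : ℕ} (Γ : EmbNetwork N) (H : Arc N → ℝ → ℝ → ℝ)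
    (c : EucN N → ℝ) : Prop :=
  ∀ x ∈ Γ.V, ∀ γ ∈ Γ.arcs, γ.toFun 1 = x → c x ≤ cHam (H γ)

/-- The Lagrangian `L : ℝ^N × ℝ^N → ℝ ∪ {+∞}` of the network, associated to the Hamiltonian
`H` and the flux limiter `c`:  `L(x,q) = L_γ(γ⁻¹(x), (q·γ̇)/|γ̇|²)` if `x ∈ γ((0,1))` and `q`
is parallel to `γ̇(γ⁻¹ x)`; at a vertex `x`, `L(x,0) = c x`, and for `q ≠ 0` tangent,
`L(x,q) = min L_γ(1, (q·γ̇(1))/|γ̇(1)|²)`, the minimum over arcs `γ ∈ Γ_x` with `q` parallel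
to `γ̇(1)`; `L(x,q) = +∞` if `(x,q) ∉ TΓ`. -/
def eLag {N : ℕ} (Γ : EmbNetwork N) (H : Arc N → ℝ → ℝ → ℝ) (c : EucN N → ℝ)
    (x q : EucN N) : EReal :=
  if x ∈ Γ.V then
    if q = 0 then ((c x : ℝ) : EReal)
    else if ∃ γ ∈ Γ.arcs, γ.toFun 1 = x ∧ ∃ lam : ℝ, q = lam • γ.deriv 1 then
      ((sInf {v : ℝ | ∃ γ ∈ Γ.arcs, γ.toFun 1 = x ∧ (∃ lam : ℝ, q = lam • γ.deriv 1) ∧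
        v = Lagr (H γ) 1 ((inner ℝ q (γ.deriv 1) : ℝ) / ‖γ.deriv 1‖ ^ 2)} : ℝ) : EReal)
    else ⊤
  else
    if ∃ γ ∈ Γ.arcs, ∃ s ∈ Ioo (0:ℝ) 1, γ.toFun s = x ∧ ∃ lam : ℝ, q = lam • γ.deriv s then
      ((sInf {v : ℝ | ∃ γ ∈ Γ.arcs, ∃ s ∈ Ioo (0:ℝ) 1, γ.toFun s = x ∧
        (∃ lam : ℝ, q = lam • γ.deriv s) ∧
        v = Lagr (H γ) s ((inner ℝ q (γ.deriv s) : ℝ) / ‖γ.deriv s‖ ^ 2)} : ℝ) : EReal)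
    else ⊤

/-- The (extended-real valued) action `∫_a^b L(ξ,ξ̇) dτ` of a curve. -/
def eAction {N : ℕ} (Γ : EmbNetwork N) (H : Arc N → ℝ → ℝ → ℝ) (c : EucN N → ℝ)
    (a b : ℝ) (ξ ξ' : ℝ → EucN N) : EReal :=
  eIntegral a b fun τ => eLag Γ H c (ξ τ) (ξ' τ)

/-- A curve `ξ : [a,b] → Γ` is admissible if there is a finite partition
`a = t₁ < t₂ < ⋯ < t_m = b` whose interior points are mapped to vertices, such that on each
open subinterval either the curve avoids the vertices and has distinct endpoints, or it is
constantly equal to a vertex. -/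
def Admissible {N : ℕ} (Γ : EmbNetwork N) (a b : ℝ) (ξ : ℝ → EucN N) : Prop :=
  ∃ (n : ℕ) (t : ℕ → ℝ), t 0 = a ∧ t n = b ∧ (∀ i, i < n → t i < t (i + 1)) ∧
    (∀ i, 0 < i → i < n → ξ (t i) ∈ Γ.V) ∧
    ∀ i, i < n →
      ((∀ τ ∈ Ioo (t i) (t (i + 1)), ξ τ ∉ Γ.V) ∧ ξ (t i) ≠ ξ (t (i + 1))) ∨
      ∃ x ∈ Γ.V, ∀ τ ∈ Ioo (t i) (t (i + 1)), ξ τ = x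

/-- The minimal action functional `S(x,t,y,r)`: the infimum of the actions
`∫_0^{r-t} L(ξ,ξ̇) dτ` over absolutely continuous curves `ξ : [0,r-t] → ℝ^N` with
`ξ(0) = x`, `ξ(r-t) = y`. -/
def minAction {N : ℕ} (Γ : EmbNetwork N) (H : Arc N → ℝ → ℝ → ℝ) (c : EucN N → ℝ)
    (x : EucN N) (t : ℝ) (y : EucN N) (r : ℝ) : ℝ :=
  sInf {v : ℝ | ∃ ξ ξ' : ℝ → EucN N, IsACDerivOn 0 (r - t) ξ ξ' ∧
    ξ 0 = x ∧ ξ (r - t) = y ∧ (v : EReal) = eAction Γ H c 0 (r - t) ξ ξ'}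

/-- The Lax–Oleinik formula on the network:
`u(x,t) = inf { ∫_0^t L(ξ,ξ̇) dτ + u₀(ξ(0)) }`, the infimum over absolutely continuous
curves `ξ : [0,t] → Γ` with `ξ(t) = x`. -/
def laxOleinik {N : ℕ} (Γ : EmbNetwork N) (H : Arc N → ℝ → ℝ → ℝ) (c : EucN N → ℝ)
    (u₀ : EucN N → ℝ) (x : EucN N) (t : ℝ) : ℝ :=
  sInf {v : ℝ | ∃ ξ ξ' : ℝ → EucN N, IsACDerivOn 0 t ξ ξ' ∧
    (∀ τ ∈ Icc 0 t, ξ τ ∈ Γ.carrier) ∧ ξ t = x ∧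
    (v : EReal) = ((u₀ (ξ 0) : ℝ) : EReal) + eAction Γ H c 0 t ξ ξ'}

/-! #### Sub- and supersolutions of the time-dependent problem on the network -/

/-- Subsolution of (HJΓ): for every arc, `v ∘ γ` is a viscosity subsolution on `Q`, and at
every vertex `x` and `t₀ > 0`, every `C¹` supertangent `ψ` to `v(x,·)` at `t₀` satisfies
`ψ'(t₀) ≤ c x`. -/
def IsNetSubsol {N : ℕ} (Γ : EmbNetwork N) (H : Arc N → ℝ → ℝ → ℝ) (c : EucN N → ℝ)
    (v : EucN N → ℝ → ℝ) : Prop :=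
  (∀ γ ∈ Γ.arcs, IsViscSubsol (H γ) fun s t => v (γ.toFun s) t) ∧
  ∀ x ∈ Γ.V, ∀ t₀ : ℝ, 0 < t₀ → ∀ ψ : ℝ → ℝ, ContDiff ℝ 1 ψ →
    IsLocalMax (fun t => v x t - ψ t) t₀ → deriv ψ t₀ ≤ c x

/-- Supersolution of (HJΓ): for every arc, `v ∘ γ` is a viscosity supersolution on `Q`, and
at every vertex `x` and `t₀ > 0`, if some `C¹` subtangent `φ` to `v(x,·)` at `t₀` has
`φ'(t₀) < c x`, then there is an arc `γ ∈ Γ_x` such that every `C¹` subtangent `Φ` to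
`v ∘ γ` at `(1,t₀)`, constrained to the closure of `Q`, satisfies
`Φ_t(1,t₀) + H_γ(1,Φ'(1,t₀)) ≥ 0`. -/
def IsNetSupersol {N : ℕ} (Γ : EmbNetwork N) (H : Arc N → ℝ → ℝ → ℝ) (c : EucN N → ℝ)
    (v : EucN N → ℝ → ℝ) : Prop :=
  (∀ γ ∈ Γ.arcs, IsViscSupersol (H γ) fun s t => v (γ.toFun s) t) ∧
  ∀ x ∈ Γ.V, ∀ t₀ : ℝ, 0 < t₀ → ∀ φ : ℝ → ℝ, ContDiff ℝ 1 φ →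
    IsLocalMin (fun t => v x t - φ t) t₀ → deriv φ t₀ < c x →
    ∃ γ ∈ Γ.arcs, γ.toFun 1 = x ∧
      ∀ Φ : ℝ → ℝ → ℝ, ContDiff ℝ 1 (fun p : ℝ × ℝ => Φ p.1 p.2) →
        IsLocalMinOn (fun p : ℝ × ℝ => v (γ.toFun p.1) p.2 - Φ p.1 p.2)
          (Icc 0 1 ×ˢ Ici 0) (1, t₀) →
        0 ≤ deriv (fun t => Φ 1 t) t₀ + H γ 1 (deriv (fun s => Φ s t₀) 1)

end

section AuxLemmas
open Set MeasureTheory Filter Topology Metric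

theorem ae_hasDerivAt_primitive {E : Type*} [NormedAddCommGroup E] [NormedSpace ℝ E]
    [CompleteSpace E] (f : ℝ → E) (hf : Integrable f) (a : ℝ) :
    ∀ᵐ x, HasDerivAt (fun t => ∫ u in a..t, f u) (f x) x := by
  filter_upwards [IsUnifLocDoublingMeasure.ae_tendsto_average_norm_sub (μ := volume)
    hf.locallyIntegrable 1] with x hx
  rw [hasDerivAt_iff_tendsto_slope, ← tendsto_sub_nhds_zero_iff]
  have key : ∀ t : ℝ, t ≠ x →
      ‖slope (fun t => ∫ u in a..t, f u) x t - f x‖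
        ≤ ⨍ y in closedBall ((x + t) / 2) (|t - x| / 2), ‖f y - f x‖ := by
    intro t ht
    have h1 : (∫ u in a..t, f u) - ∫ u in a..x, f u = ∫ u in x..t, f u := by
      rw [← intervalIntegral.integral_add_adjacent_intervals
        (hf.intervalIntegrable) (hf.intervalIntegrable) (a := a) (b := x) (c := t)]
      abel
    have h2 : slope (fun t => ∫ u in a..t, f u) x t - f x
        = (t - x)⁻¹ • ∫ u in x..t, (f u - f x) := by
      rw [slope_def_module, h1, intervalIntegral.integral_sub hf.intervalIntegrable
        (intervalIntegrable_const), intervalIntegral.integral_const, smul_sub,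
        smul_smul, inv_mul_cancel₀ (sub_ne_zero.2 ht), one_smul]
    have hball : closedBall ((x + t) / 2) (|t - x| / 2) = Icc (min x t) (max x t) := by
      rw [Real.closedBall_eq_Icc]
      rcases le_total x t with h | h
      · rw [abs_of_nonneg (by linarith), min_eq_left h, max_eq_right h]
        congr 1 <;> ring
      · rw [abs_of_nonpos (by linarith), min_eq_right h, max_eq_left h]
        congr 1 <;> ring
    have hvol : max x t - min x t = |t - x| := by
      rcases le_total x t with h | h
      · rw [abs_of_nonneg (by linarith), min_eq_left h, max_eq_right h]
      · rw [abs_of_nonpos (by linarith), min_eq_right h, max_eq_left h]; ring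
    rw [h2, norm_smul, norm_inv, Real.norm_eq_abs, hball, setAverage_eq, Real.volume_real_Icc_of_le min_le_max,
      hvol, smul_eq_mul]
    gcongr
    calc ‖∫ u in x..t, (f u - f x)‖ ≤ |∫ u in x..t, ‖f u - f x‖| :=
          intervalIntegral.norm_integral_le_abs_integral_norm
      _ = ∫ y in Icc (min x t) (max x t), ‖f y - f x‖ := by
          rcases le_total x t with h | h
          · rw [min_eq_left h, max_eq_right h, intervalIntegral.integral_of_le h,
              ← integral_Icc_eq_integral_Ioc,
              abs_of_nonneg (integral_nonneg fun y => norm_nonneg _)]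
          · rw [min_eq_right h, max_eq_left h, intervalIntegral.integral_of_ge h, abs_neg,
              ← integral_Icc_eq_integral_Ioc,
              abs_of_nonneg (integral_nonneg fun y => norm_nonneg _)]
  apply squeeze_zero_norm' _ (hx (fun t => (x + t) / 2) (fun t => |t - x| / 2) ?_ ?_)
  · filter_upwards [self_mem_nhdsWithin] with t ht
    exact key t ht
  · apply tendsto_nhdsWithin_of_tendsto_nhds_of_eventually_within
    · have h0 : Tendsto (fun t : ℝ => |t - x| / 2) (𝓝 x) (𝓝 (|x - x| / 2)) :=
        (((continuous_id.sub continuous_const).abs.div_const 2).tendsto x)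
      simpa using h0.mono_left nhdsWithin_le_nhds
    · filter_upwards [self_mem_nhdsWithin] with t ht
      have h1 : t - x ≠ 0 := sub_ne_zero.2 ht
      exact mem_Ioi.2 (by positivity)
  · filter_upwards with t
    simp only [mem_closedBall, one_mul, Real.dist_eq]
    have h3 : x - (x + t) / 2 = -((t - x) / 2) := by ring
    rw [h3, abs_neg, abs_div]
    simp


theorem monotone_integral_deriv_le {a b : ℝ} (hab : a ≤ b) (f φ : ℝ → ℝ)
    (hmono : Monotone f) (hcb : ∀ t, b ≤ t → f t = f b)
    (hderiv : ∀ᵐ x, HasDerivAt f (φ x) x) (hφ : IntegrableOn φ (Icc a b)) :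
    ∫ x in Icc a b, φ x ≤ f b - f a := by
  set c : ℕ → ℝ := fun n => ((n : ℝ) + 1)⁻¹ with hc
  have hcpos : ∀ n, 0 < c n := fun n => by positivity
  have hclim : Tendsto c atTop (𝓝 0) := tendsto_one_div_add_atTop_nhds_zero_nat.congr (by
    intro n; rw [hc]; push_cast; rw [one_div])
  -- a.e. nonnegativity of φ
  have hφ0 : ∀ᵐ x : ℝ, 0 ≤ φ x := by
    filter_upwards [hderiv] with x hx
    rw [hasDerivAt_iff_tendsto_slope] at hx
    refine ge_of_tendsto hx ?_
    filter_upwards [self_mem_nhdsWithin] with t ht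
    rcases lt_or_gt_of_ne (show t ≠ x from ht) with h | h
    · rw [slope_def_field, div_nonneg_iff]
      exact Or.inr ⟨by simpa using hmono h.le, by linarith⟩
    · rw [slope_def_field]
      exact div_nonneg (by simpa using hmono h.le) (by linarith)
  -- a.e. convergence of difference quotients
  have hlim : ∀ᵐ x : ℝ, Tendsto (fun n => (f (x + c n) - f x) / c n) atTop (𝓝 (φ x)) := by
    filter_upwards [hderiv] with x hx
    rw [hasDerivAt_iff_tendsto_slope] at hx
    have h1 : Tendsto (fun n => x + c n) atTop (𝓝[≠] x) := by
      apply tendsto_nhdsWithin_of_tendsto_nhds_of_eventually_within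
      · simpa using (tendsto_const_nhds.add hclim)
      · filter_upwards with n
        simp only [mem_compl_iff, mem_singleton_iff]
        have := hcpos n; intro h; nlinarith [congrArg (fun y => y - x) h]
    have := hx.comp h1
    refine this.congr fun n => ?_
    rw [Function.comp_apply, slope_def_field]
    congr 1
    ring
  -- integrability facts
  have hint : ∀ d : ℝ, IntegrableOn (fun x => f (x + d)) (Icc a b) := by
    intro d
    have m2 : Monotone fun x => f (x + d) := fun u v huv => hmono (by linarith)
    exact (m2.monotoneOn _).integrableOn_isCompact isCompact_Icc
  have hint0 : IntegrableOn f (Icc a b) := (hmono.monotoneOn _).integrableOn_isCompact isCompact_Icc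
  have hII : ∀ u v : ℝ, IntervalIntegrable f volume u v := fun u v =>
    (hmono.monotoneOn _).intervalIntegrable
  -- the integral of each difference quotient is at most f b - f a
  have hbound : ∀ n, ∫ x in Icc a b, (f (x + c n) - f x) / c n ≤ f b - f a := by
    intro n
    have hcp := hcpos n
    have e1 : ∫ x in Icc a b, (f (x + c n) - f x) / c n
        = ((∫ x in Icc a b, f (x + c n)) - ∫ x in Icc a b, f x) / c n := by
      rw [integral_div, integral_sub (hint (c n)) hint0]
    have e2 : ∫ x in Icc a b, f (x + c n) = ∫ x in a + c n..b + c n, f x := by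
      rw [integral_Icc_eq_integral_Ioc, ← intervalIntegral.integral_of_le hab,
        intervalIntegral.integral_comp_add_right]
    have e3 : ∫ x in Icc a b, f x = ∫ x in a..b, f x := by
      rw [integral_Icc_eq_integral_Ioc, ← intervalIntegral.integral_of_le hab]
    have chasles : (∫ x in a + c n..b + c n, f x) - ∫ x in a..b, f x
        = (∫ x in b..b + c n, f x) - ∫ x in a..a + c n, f x := by
      have c1 : (∫ x in a..a + c n, f x) + ∫ x in a + c n..b + c n, f x
          = ∫ x in a..b + c n, f x :=
        intervalIntegral.integral_add_adjacent_intervals (hII _ _) (hII _ _)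
      have c2 : (∫ x in a..b, f x) + ∫ x in b..b + c n, f x = ∫ x in a..b + c n, f x :=
        intervalIntegral.integral_add_adjacent_intervals (hII _ _) (hII _ _)
      linarith
    have e4 : ∫ x in b..b + c n, f x = c n * f b := by
      rw [intervalIntegral.integral_of_le (by linarith)]
      rw [setIntegral_congr_fun measurableSet_Ioc (fun t ht => hcb t ht.1.le)]
      rw [setIntegral_const, Real.volume_real_Ioc_of_le (by linarith),
        smul_eq_mul]
      ring_nf
    have e5 : c n * f a ≤ ∫ x in a..a + c n, f x := by
      rw [intervalIntegral.integral_of_le (by linarith)]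
      have : ∫ (_ : ℝ) in Ioc a (a + c n), f a = c n * f a := by
        rw [setIntegral_const, Real.volume_real_Ioc_of_le (by linarith),
          smul_eq_mul]
        ring_nf
      rw [← this]
      apply setIntegral_mono_on (integrableOn_const (by simp [Real.volume_Ioc]))
        ((hII a (a + c n)).1.mono_set (by simp)) measurableSet_Ioc
      intro t ht
      exact hmono ht.1.le
    rw [e1, e2, e3, chasles]
    rw [div_le_iff₀ hcp]
    nlinarith [e4, e5]
  -- Fatou
  have haemeas : ∀ n : ℕ, AEMeasurable
      (fun x => ENNReal.ofReal ((f (x + c n) - f x) / c n)) (volume.restrict (Icc a b)) := by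
    intro n
    apply ENNReal.measurable_ofReal.comp_aemeasurable
    have m2 : Monotone fun x => f (x + c n) := fun u v huv => hmono (by linarith)
    exact ((m2.measurable.sub hmono.measurable).div_const _).aemeasurable
  have fatou := lintegral_liminf_le' (u := atTop) haemeas
  have step1 : ∫⁻ x in Icc a b, ENNReal.ofReal (φ x)
      = ∫⁻ x in Icc a b, liminf (fun n => ENNReal.ofReal ((f (x + c n) - f x) / c n)) atTop := by
    apply lintegral_congr_ae
    filter_upwards [ae_restrict_of_ae hlim] with x hx
    exact (((ENNReal.continuous_ofReal.tendsto _).comp hx).liminf_eq).symm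
  have step2 : ∀ n, ∫⁻ x in Icc a b, ENNReal.ofReal ((f (x + c n) - f x) / c n)
      ≤ ENNReal.ofReal (f b - f a) := by
    intro n
    have hgn_nonneg : ∀ x, 0 ≤ (f (x + c n) - f x) / c n := by
      intro x
      have := hcpos n
      apply div_nonneg _ this.le
      have : f x ≤ f (x + c n) := hmono (by linarith)
      linarith
    have hgn_int : IntegrableOn (fun x => (f (x + c n) - f x) / c n) (Icc a b) :=
      ((hint (c n)).sub hint0).div_const _
    rw [← ofReal_integral_eq_lintegral_ofReal hgn_int
      (Eventually.of_forall hgn_nonneg)]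
    exact ENNReal.ofReal_le_ofReal (hbound n)
  have step3 : ∫⁻ x in Icc a b, ENNReal.ofReal (φ x) ≤ ENNReal.ofReal (f b - f a) := by
    rw [step1]
    refine fatou.trans ?_
    have : liminf (fun n => ∫⁻ x in Icc a b, ENNReal.ofReal ((f (x + c n) - f x) / c n)) atTop
        ≤ liminf (fun _ : ℕ => ENNReal.ofReal (f b - f a)) atTop :=
      liminf_le_liminf (Eventually.of_forall step2)
    simpa using this
  -- conclude
  have hfin : ∫⁻ x in Icc a b, ENNReal.ofReal (φ x) = ENNReal.ofReal (∫ x in Icc a b, φ x) :=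
    (ofReal_integral_eq_lintegral_ofReal hφ (ae_restrict_of_ae hφ0)).symm
  rw [hfin] at step3
  have hba : 0 ≤ f b - f a := by have := hmono hab; linarith
  exact (ENNReal.ofReal_le_ofReal_iff hba).1 step3


namespace Arc
variable {N : ℕ}

theorem continuousOn (γ : Arc N) : ContinuousOn γ.toFun (Icc 0 1) :=
  fun s hs => (γ.hasDeriv s hs).continuousWithinAt

theorem exists_lowerLip (γ : Arc N) :
    ∃ c > 0, ∀ s ∈ Icc (0:ℝ) 1, ∀ s' ∈ Icc (0:ℝ) 1,
      c * |s - s'| ≤ ‖γ.toFun s - γ.toFun s'‖ := by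
  obtain ⟨s₀, hs₀, hmin⟩ := isCompact_Icc.exists_isMinOn (nonempty_Icc.2 zero_le_one)
    (continuous_norm.comp_continuousOn γ.contDeriv)
  set m : ℝ := ‖γ.deriv s₀‖ with hm
  have hmpos : 0 < m := norm_pos_iff.2 (γ.deriv_ne_zero s₀ hs₀)
  have huc := isCompact_Icc.uniformContinuousOn_of_continuous γ.contDeriv
  rw [Metric.uniformContinuousOn_iff] at huc
  obtain ⟨δ, hδpos, hδ⟩ := huc (m / 2) (by linarith)
  have local_est : ∀ s ∈ Icc (0:ℝ) 1, ∀ s' ∈ Icc (0:ℝ) 1, |s - s'| < δ →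
      m / 2 * |s - s'| ≤ ‖γ.toFun s - γ.toFun s'‖ := by
    have symm_case : ∀ s ∈ Icc (0:ℝ) 1, ∀ s' ∈ Icc (0:ℝ) 1, s' ≤ s → |s - s'| < δ →
        m / 2 * |s - s'| ≤ ‖γ.toFun s - γ.toFun s'‖ := by
      intro s hs s' hs' hle hδd
      have hsub : Icc s' s ⊆ Icc (0:ℝ) 1 := Icc_subset_Icc hs'.1 hs.2
      have hg : ∀ u ∈ Icc s' s,
          HasDerivWithinAt (fun u => γ.toFun u - u • γ.deriv s')
            (γ.deriv u - γ.deriv s') (Icc s' s) u := by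
        intro u hu
        have h2 : HasDerivWithinAt (fun u : ℝ => u • γ.deriv s') ((1:ℝ) • γ.deriv s')
            (Icc s' s) u := (hasDerivWithinAt_id u _).smul_const (γ.deriv s')
        rw [one_smul] at h2
        exact ((γ.hasDeriv u (hsub hu)).mono hsub).sub h2
      have hbd : ∀ u ∈ Icc s' s, ‖γ.deriv u - γ.deriv s'‖ ≤ m / 2 := by
        intro u hu
        have hdist : dist u s' < δ := by
          rw [Real.dist_eq, abs_of_nonneg (sub_nonneg.2 hu.1)]
          rw [abs_of_nonneg (sub_nonneg.2 hle)] at hδd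
          linarith [hu.2]
        exact (dist_eq_norm (γ.deriv u) (γ.deriv s') ▸ (hδ u (hsub hu) s' hs' hdist)).le
      have key := Convex.norm_image_sub_le_of_norm_hasDerivWithin_le hg hbd
        (convex_Icc s' s) (left_mem_Icc.2 hle) (right_mem_Icc.2 hle)
      set X := (γ.toFun s - s • γ.deriv s') - (γ.toFun s' - s' • γ.deriv s') with hX
      have hlow : m * |s - s'| ≤ ‖(s - s') • γ.deriv s'‖ := by
        rw [norm_smul, Real.norm_eq_abs, mul_comm]
        gcongr
        exact hmin hs'
      have hXd : γ.toFun s - γ.toFun s' = X + (s - s') • γ.deriv s' := by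
        rw [hX, sub_smul]; abel
      have t1 : ‖(s - s') • γ.deriv s'‖ ≤ ‖γ.toFun s - γ.toFun s'‖ + ‖X‖ := by
        have e : (s - s') • γ.deriv s' = (γ.toFun s - γ.toFun s') - X := by
          rw [hXd]; abel
        rw [e]
        exact norm_sub_le _ _
      rw [Real.norm_eq_abs] at key
      linarith
    intro s hs s' hs' hd
    rcases le_total s' s with h | h
    · exact symm_case s hs s' hs' h hd
    · rw [abs_sub_comm, norm_sub_rev]
      exact symm_case s' hs' s hs h (by rwa [abs_sub_comm])
  set K : Set (ℝ × ℝ) := (Icc 0 1 ×ˢ Icc 0 1) ∩ {p : ℝ × ℝ | δ/2 ≤ |p.1 - p.2|} with hK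
  by_cases hKne : K.Nonempty
  · have hKc : IsCompact K := (isCompact_Icc.prod isCompact_Icc).inter_right
      (isClosed_le continuous_const ((continuous_fst.sub continuous_snd).abs))
    have hcont : ContinuousOn (fun p : ℝ × ℝ => ‖γ.toFun p.1 - γ.toFun p.2‖) K := by
      apply ContinuousOn.norm
      apply ContinuousOn.sub
      · exact γ.continuousOn.comp continuous_fst.continuousOn (fun p hp => hp.1.1)
      · exact γ.continuousOn.comp continuous_snd.continuousOn (fun p hp => hp.1.2)
    obtain ⟨p, hpK, hpmin⟩ := hKc.exists_isMinOn hKne hcont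
    have hepos : 0 < ‖γ.toFun p.1 - γ.toFun p.2‖ := by
      rw [norm_pos_iff, sub_ne_zero]
      intro h
      have heq : p.1 = p.2 := γ.injOn hpK.1.1 hpK.1.2 h
      have : |p.1 - p.2| = 0 := by rw [heq]; simp
      have := hpK.2
      simp only [mem_setOf_eq] at this
      linarith
    set e : ℝ := ‖γ.toFun p.1 - γ.toFun p.2‖ with he
    refine ⟨min (m/2) e, lt_min (by linarith) hepos, ?_⟩
    intro s hs s' hs'
    rcases lt_or_ge |s - s'| (δ/2) with h | h
    · exact le_trans (mul_le_mul_of_nonneg_right (min_le_left _ _) (abs_nonneg _))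
        (local_est s hs s' hs' (by linarith))
    · have h1 : |s - s'| ≤ 1 := by
        rw [abs_le]; constructor
        · linarith [hs.1, hs'.2]
        · linarith [hs.2, hs'.1]
      have hmem : (s, s') ∈ K := mem_inter (mk_mem_prod hs hs') h
      have h2 : e ≤ ‖γ.toFun s - γ.toFun s'‖ := isMinOn_iff.1 hpmin (s, s') hmem
      have h3 : min (m/2) e * |s-s'| ≤ e * 1 :=
        mul_le_mul (min_le_right _ _) h1 (abs_nonneg _) hepos.le
      rw [mul_one] at h3
      linarith
  · refine ⟨m/2, by linarith, fun s hs s' hs' => local_est s hs s' hs' ?_⟩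
    rw [not_nonempty_iff_eq_empty] at hKne
    by_contra hcon
    push_neg at hcon
    have : (s, s') ∈ K := mem_inter (mk_mem_prod hs hs') (by simpa using by linarith)
    rw [hKne] at this
    exact this
end Arc


theorem sigma_hasDerivAt {N : ℕ} (γ : Arc N) (c : ℝ) (hc : 0 < c)
    (hlip : ∀ s ∈ Icc (0:ℝ) 1, ∀ s' ∈ Icc (0:ℝ) 1,
      c * |s - s'| ≤ ‖γ.toFun s - γ.toFun s'‖)
    (η : ℝ → EucN N) (σ : ℝ → ℝ) (τ : ℝ) (U : Set ℝ) (hU : U ∈ 𝓝 τ)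
    (hσmem : ∀ t ∈ U, σ t ∈ Icc (0:ℝ) 1) (hση : ∀ t ∈ U, γ.toFun (σ t) = η t)
    (q : EucN N) (hq : HasDerivAt η q τ) :
    HasDerivAt σ ((inner ℝ q (γ.deriv (σ τ)) : ℝ) / ‖γ.deriv (σ τ)‖ ^ 2) τ ∧
      q = ((inner ℝ q (γ.deriv (σ τ)) : ℝ) / ‖γ.deriv (σ τ)‖ ^ 2) • γ.deriv (σ τ) := by
  have hτU : τ ∈ U := mem_of_mem_nhds hU
  set s₀ : ℝ := σ τ with hs₀def
  have hs₀ : s₀ ∈ Icc (0:ℝ) 1 := hσmem τ hτU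
  set d : EucN N := γ.deriv s₀ with hd
  have hdne : d ≠ 0 := γ.deriv_ne_zero s₀ hs₀
  have hdpos : (0:ℝ) < ‖d‖ ^ 2 := pow_pos (norm_pos_iff.2 hdne) 2
  set lam : ℝ := (inner ℝ q d : ℝ) / ‖d‖ ^ 2 with hlam
  set l : Filter ℝ := 𝓝[≠] τ with hldef
  have hUl : ∀ᶠ t in l, t ∈ U := eventually_nhdsWithin_of_eventually_nhds
    (eventually_of_mem hU fun t ht => ht)
  -- sigma increments controlled by eta increments
  have hσbd : ∀ t ∈ U, |σ t - s₀| ≤ c⁻¹ * ‖η t - η τ‖ := by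
    intro t ht
    have h1 := hlip (σ t) (hσmem t ht) s₀ hs₀
    rw [hση t ht, hση τ hτU] at h1
    rw [← le_div_iff₀' hc] at h1
    simpa [div_eq_inv_mul] using h1
  -- sigma tends to s₀
  have hσcont : Tendsto σ (𝓝 τ) (𝓝 s₀) := by
    rw [← tendsto_sub_nhds_zero_iff]
    refine squeeze_zero_norm' (a := fun t => c⁻¹ * ‖η t - η τ‖) ?_ ?_
    · filter_upwards [hU] with t ht
      rw [Real.norm_eq_abs]; exact hσbd t ht
    · have : Tendsto (fun t => η t - η τ) (𝓝 τ) (𝓝 0) := by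
        rw [← sub_self (η τ)]
        exact (hq.continuousAt.tendsto).sub tendsto_const_nhds
      simpa using (this.norm.const_mul c⁻¹)
  -- slope of η tends to q
  have hqslope : Tendsto (slope η τ) l (𝓝 q) := hasDerivAt_iff_tendsto_slope.1 hq
  -- slope of σ bounded by slope of η
  have hslope_bd : ∀ᶠ t in l, |slope σ τ t| ≤ c⁻¹ * ‖slope η τ t‖ := by
    filter_upwards [hUl, self_mem_nhdsWithin] with t ht htne
    have htd : (0:ℝ) < |t - τ| := abs_pos.2 (sub_ne_zero.2 htne)
    have e1 : |slope σ τ t| = |σ t - s₀| / |t - τ| := by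
      rw [slope_def_field, abs_div]
    have e2 : ‖slope η τ t‖ = ‖η t - η τ‖ / |t - τ| := by
      rw [slope_def_module, norm_smul, norm_inv, Real.norm_eq_abs, div_eq_inv_mul]
    rw [e1, e2, ← mul_div_assoc]
    gcongr
    exact hσbd t ht
  have hslopeA : ∀ᶠ t in l, |slope σ τ t| ≤ c⁻¹ * (‖q‖ + 1) := by
    have hball : ∀ᶠ t in l, ‖slope η τ t‖ ≤ ‖q‖ + 1 := by
      have := hqslope.norm
      filter_upwards [this.eventually_le_const (by linarith [norm_nonneg q] : ‖q‖ < ‖q‖ + 1)]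
        with t ht using ht
    filter_upwards [hslope_bd, hball] with t h1 h2
    exact h1.trans (by
      have : (0:ℝ) ≤ c⁻¹ := (inv_pos.2 hc).le
      nlinarith)
  -- local C¹ estimate for γ at s₀
  have hrem : ∀ ε > 0, ∃ ρ > 0, ∀ s ∈ Icc (0:ℝ) 1, |s - s₀| < ρ →
      ‖γ.toFun s - γ.toFun s₀ - (s - s₀) • d‖ ≤ ε * |s - s₀| := by
    intro ε hε
    have hcw : ContinuousWithinAt γ.deriv (Icc 0 1) s₀ := γ.contDeriv s₀ hs₀
    rw [Metric.continuousWithinAt_iff] at hcw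
    obtain ⟨ρ, hρpos, hρ⟩ := hcw ε hε
    refine ⟨ρ, hρpos, ?_⟩
    intro s hs hsρ
    have hsub : Icc (min s s₀) (max s s₀) ⊆ Icc (0:ℝ) 1 := by
      apply Icc_subset_Icc
      · exact le_min hs.1 hs₀.1
      · exact max_le hs.2 hs₀.2
    have hg : ∀ u ∈ Icc (min s s₀) (max s s₀),
        HasDerivWithinAt (fun u => γ.toFun u - u • d) (γ.deriv u - d)
          (Icc (min s s₀) (max s s₀)) u := by
      intro u hu
      have h2 : HasDerivWithinAt (fun u : ℝ => u • d) ((1:ℝ) • d)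
          (Icc (min s s₀) (max s s₀)) u := (hasDerivWithinAt_id u _).smul_const d
      rw [one_smul] at h2
      exact ((γ.hasDeriv u (hsub hu)).mono hsub).sub h2
    have hbd : ∀ u ∈ Icc (min s s₀) (max s s₀), ‖γ.deriv u - d‖ ≤ ε := by
      intro u hu
      have hud : dist u s₀ < ρ := by
        rw [Real.dist_eq, abs_sub_lt_iff]
        rw [abs_sub_lt_iff] at hsρ
        rcases le_total s s₀ with h | h
        · rw [min_eq_left h, max_eq_right h] at hu
          constructor <;> [linarith [hu.2]; linarith [hu.1]]
        · rw [min_eq_right h, max_eq_left h] at hu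
          constructor <;> [linarith [hu.2]; linarith [hu.1]]
      have := hρ (hsub hu) hud
      rw [dist_eq_norm] at this
      exact this.le
    have key := Convex.norm_image_sub_le_of_norm_hasDerivWithin_le hg hbd
      (convex_Icc _ _) (show s₀ ∈ Icc (min s s₀) (max s s₀) from
        ⟨min_le_right _ _, le_max_right _ _⟩)
      (show s ∈ Icc (min s s₀) (max s s₀) from ⟨min_le_left _ _, le_max_left _ _⟩)
    calc ‖γ.toFun s - γ.toFun s₀ - (s - s₀) • d‖
        = ‖(γ.toFun s - s • d) - (γ.toFun s₀ - s₀ • d)‖ := by rw [sub_smul]; congr 1; abel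
      _ ≤ ε * ‖s - s₀‖ := key
      _ = ε * |s - s₀| := by rw [Real.norm_eq_abs]
  -- the remainder tends to zero
  set R : ℝ → EucN N := fun t => slope η τ t - slope σ τ t • d with hR
  have hRslope : ∀ᶠ t in l, R t = (t - τ)⁻¹ • (γ.toFun (σ t) - γ.toFun s₀ - (σ t - s₀) • d) := by
    filter_upwards [hUl] with t ht
    rw [hR]
    simp only
    rw [slope_def_module, slope_def_field, hση t ht, hση τ hτU, div_eq_inv_mul,
      mul_smul, ← smul_sub, smul_sub]
  have hRzero : Tendsto R l (𝓝 0) := by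
    rw [NormedAddCommGroup.tendsto_nhds_zero]
    intro ε hε
    set A : ℝ := c⁻¹ * (‖q‖ + 1) with hA
    have hApos : 0 < A + 1 := by positivity
    obtain ⟨ρ, hρpos, hρ⟩ := hrem (ε / (A + 1)) (by positivity)
    have hσnear : ∀ᶠ t in l, |σ t - s₀| < ρ := by
      apply eventually_nhdsWithin_of_eventually_nhds
      have := hσcont
      rw [Metric.tendsto_nhds] at this
      filter_upwards [this ρ hρpos] with t ht using by rwa [Real.dist_eq] at ht
    filter_upwards [hRslope, hσnear, hslopeA, hUl] with t hRt hnear hA' htU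
    rw [hRt, norm_smul, norm_inv, Real.norm_eq_abs]
    rcases eq_or_ne t τ with rfl | htne
    · simpa using hε
    have htd : (0:ℝ) < |t - τ| := abs_pos.2 (sub_ne_zero.2 htne)
    calc |t - τ|⁻¹ * ‖γ.toFun (σ t) - γ.toFun s₀ - (σ t - s₀) • d‖
        ≤ |t - τ|⁻¹ * (ε / (A + 1) * |σ t - s₀|) := by
          gcongr
          exact hρ (σ t) (hσmem t htU) hnear
      _ = ε / (A + 1) * (|σ t - s₀| / |t - τ|) := by ring
      _ = ε / (A + 1) * |slope σ τ t| := by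
          rw [slope_def_field, abs_div]
      _ ≤ ε / (A + 1) * A := by
          gcongr
      _ < ε := by
          rw [div_mul_eq_mul_div, div_lt_iff₀ hApos]
          nlinarith
  -- conclude
  have hsmul : Tendsto (fun t => slope σ τ t • d) l (𝓝 q) := by
    have := hqslope.sub hRzero
    rw [sub_zero] at this
    apply this.congr
    intro t
    rw [hR]
    simp only
    abel
  have hlamlim : Tendsto (slope σ τ) l (𝓝 lam) := by
    have hcontlin : Continuous fun v : EucN N => (inner ℝ v d : ℝ) / ‖d‖ ^ 2 :=
      (continuous_id.inner continuous_const).div_const _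
    have := (hcontlin.tendsto q).comp hsmul
    apply this.congr
    intro t
    simp only [Function.comp_apply]
    rw [real_inner_smul_left, real_inner_self_eq_norm_sq]
    field_simp
  have hderiv : HasDerivAt σ lam τ := hasDerivAt_iff_tendsto_slope.2 hlamlim
  refine ⟨hderiv, ?_⟩
  have h1 : Tendsto (fun t => slope σ τ t • d) l (𝓝 (lam • d)) := by
    exact hlamlim.smul_const d
  have : NeBot l := by
    rw [hldef]
    infer_instance
  exact (tendsto_nhds_unique hsmul h1)


variable {H : ℝ → ℝ → ℝ}

theorem IsHamiltonian.continuous_slice (hH : IsHamiltonian H) {s : ℝ} (hs : s ∈ Icc (0:ℝ) 1) :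
    Continuous fun μ => H s μ := by
  rw [← continuousOn_univ]
  have hmap : ∀ μ : ℝ, (s, μ) ∈ (Icc (0:ℝ) 1 ×ˢ (univ : Set ℝ)) := fun μ => ⟨hs, trivial⟩
  exact fun μ _ => ((hH.cont (s, μ) (hmap μ)).comp
    ((continuous_const.prodMk continuous_id).continuousWithinAt) (fun μ' _ => hmap μ'))

theorem IsHamiltonian.bddAbove_fenchel (hH : IsHamiltonian H) {s : ℝ} (hs : s ∈ Icc (0:ℝ) 1)
    (lam : ℝ) : BddAbove (range fun μ => lam * μ - H s μ) := by
  obtain ⟨R, hR⟩ := hH.superlinear (|lam| + 1)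
  set R' : ℝ := max R 0 with hR'
  obtain ⟨μ₀, _, hmax⟩ := (isCompact_Icc (a := -R') (b := R')).exists_isMaxOn
    (nonempty_Icc.2 (neg_le_self (le_max_right R 0)))
    ((continuous_const.mul continuous_id).sub (hH.continuous_slice hs)).continuousOn
  refine ⟨max (lam * μ₀ - H s μ₀) 0, ?_⟩
  rintro v ⟨μ, rfl⟩
  rcases le_or_gt |μ| R' with h | h
  · have : μ ∈ Icc (-R') R' := abs_le.1 h
    exact le_max_of_le_left (hmax this)
  · have h2 : R ≤ |μ| := le_trans (le_max_left R 0) h.le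
    have h3 := hR s hs μ h2
    have h4 : lam * μ ≤ |lam| * |μ| := by
      calc lam * μ ≤ |lam * μ| := le_abs_self _
        _ = |lam| * |μ| := abs_mul _ _
    apply le_max_of_le_right
    show lam * μ - H s μ ≤ 0
    have h5 : (|lam| + 1) * |μ| = |lam| * |μ| + |μ| := by ring
    have h6 : 0 ≤ |μ| := abs_nonneg μ
    linarith

theorem IsHamiltonian.le_Lagr (hH : IsHamiltonian H) {s : ℝ} (hs : s ∈ Icc (0:ℝ) 1)
    (lam μ : ℝ) : lam * μ - H s μ ≤ Lagr H s lam :=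
  le_csSup (hH.bddAbove_fenchel hs lam) (mem_range_self μ)

theorem IsHamiltonian.bddBelow_range (hH : IsHamiltonian H) {s : ℝ} (hs : s ∈ Icc (0:ℝ) 1) :
    BddBelow (range fun μ => H s μ) := by
  obtain ⟨R, hR⟩ := hH.superlinear 0
  set R' : ℝ := max R 0 with hR'
  obtain ⟨μ₀, _, hmin⟩ := (isCompact_Icc (a := -R') (b := R')).exists_isMinOn
    (nonempty_Icc.2 (neg_le_self (le_max_right R 0)))
    (hH.continuous_slice hs).continuousOn
  refine ⟨min (H s μ₀) 0, ?_⟩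
  rintro v ⟨μ, rfl⟩
  rcases le_or_gt |μ| R' with h | h
  · exact le_trans (min_le_left _ _) (hmin (abs_le.1 h))
  · have h2 : R ≤ |μ| := le_trans (le_max_left R 0) h.le
    have := hR s hs μ h2
    simp only [zero_mul] at this
    exact le_trans (min_le_right _ _) this

/-- `sInf_μ H s μ ≤ - cHam H` for every `s ∈ [0,1]`. -/
theorem IsHamiltonian.sInf_le_neg_cHam (hH : IsHamiltonian H) {s : ℝ} (hs : s ∈ Icc (0:ℝ) 1) :
    sInf (range fun μ => H s μ) ≤ -cHam H := by
  rw [cHam, neg_neg]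
  apply le_csSup
  · obtain ⟨μ₀, _, hmax⟩ := (isCompact_Icc (a := (0:ℝ)) (b := 1)).exists_isMaxOn
      (nonempty_Icc.2 zero_le_one)
      (by
        apply ContinuousOn.comp (f := fun u => ((u, (0:ℝ)) : ℝ × ℝ)) hH.cont
        · exact (continuous_id.prodMk continuous_const).continuousOn
        · exact fun u hu => ⟨hu, trivial⟩)
    refine ⟨H μ₀ 0, ?_⟩
    rintro v ⟨u, hu, rfl⟩
    calc sInf (range fun μ => H u μ) ≤ H u 0 :=
          csInf_le (hH.bddBelow_range hu) (mem_range_self 0)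
      _ ≤ H μ₀ 0 := hmax hu
  · exact mem_image_of_mem _ hs

/-- Continuous bounded selection of an almost minimizing momentum. -/
theorem IsHamiltonian.exists_momentum (hH : IsHamiltonian H) {ε : ℝ} (hε : 0 < ε) :
    ∃ p : ℝ → ℝ, Continuous p ∧ (∃ B : ℝ, ∀ u : ℝ, |p u| ≤ B) ∧
      ∀ s ∈ Icc (0:ℝ) 1, H s (p s) ≤ -cHam H + ε := by
  set M : ℝ := -cHam H with hM
  -- for each μ, an open set O μ with O μ ∩ Icc 0 1 = {s ∈ Icc 0 1 | H s μ < M + ε}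
  have hOex : ∀ μ : ℝ, ∃ O : Set ℝ, IsOpen O ∧
      (fun s => H s μ) ⁻¹' (Iio (M + ε)) ∩ Icc 0 1 = O ∩ Icc 0 1 := by
    intro μ
    have hcont : ContinuousOn (fun s => H s μ) (Icc (0:ℝ) 1) := by
      apply ContinuousOn.comp (f := fun u => ((u, μ) : ℝ × ℝ)) hH.cont
      · exact (continuous_id.prodMk continuous_const).continuousOn
      · exact fun u hu => ⟨hu, trivial⟩
    rw [_root_.continuousOn_iff'] at hcont
    obtain ⟨O, hO, hOeq⟩ := hcont (Iio (M + ε)) isOpen_Iio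
    exact ⟨O, hO, hOeq⟩
  choose O hOopen hOeq using hOex
  -- shrunk opens
  set O' : ℝ → Set ℝ := fun μ => O μ ∩ Ioo (-1) 2 with hO'
  have hO'open : ∀ μ, IsOpen (O' μ) := fun μ => (hOopen μ).inter isOpen_Ioo
  -- covering
  have hcover : Icc (0:ℝ) 1 ⊆ ⋃ μ : ℝ, O' μ := by
    intro s hs
    have h1 : sInf (range fun μ => H s μ) ≤ M := hH.sInf_le_neg_cHam hs
    have h2 : sInf (range fun μ => H s μ) < M + ε := by linarith
    obtain ⟨v, ⟨μ, rfl⟩, hv⟩ := (csInf_lt_iff (hH.bddBelow_range hs)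
      (range_nonempty _)).1 h2
    have hsO : s ∈ O μ ∩ Icc 0 1 := by
      rw [← hOeq μ]
      exact ⟨hv, hs⟩
    exact mem_iUnion.2 ⟨μ, hsO.1, by constructor <;> [linarith [hs.1]; linarith [hs.2]]⟩
  obtain ⟨t, ht⟩ := isCompact_Icc.elim_finite_subcover O' hO'open hcover
  -- distance functions
  set dd : ℝ → ℝ → ℝ := fun μ s => Metric.infDist s (O' μ)ᶜ with hdd
  have hddcont : ∀ μ, Continuous (dd μ) := fun μ => Metric.continuous_infDist_pt _
  have hddnonneg : ∀ μ s, 0 ≤ dd μ s := fun μ s => Metric.infDist_nonneg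
  have hddpos : ∀ μ, ∀ s ∈ O' μ, 0 < dd μ s := by
    intro μ s hs
    rw [hdd]
    have hne : ((O' μ)ᶜ).Nonempty := ⟨3, by
      simp only [mem_compl_iff]
      intro hmem
      exact absurd hmem.2.2 (by norm_num)⟩
    exact ((hO'open μ).isClosed_compl.notMem_iff_infDist_pos hne).1 (by simpa using hs)
  have hddzero : ∀ μ s, s ∉ O' μ → dd μ s = 0 := by
    intro μ s hs
    apply Metric.infDist_zero_of_mem
    simpa using hs
  set den : ℝ → ℝ := fun s => ∑ μ ∈ t, dd μ s with hden
  have hdencont : Continuous den := continuous_finset_sum _ fun μ _ => hddcont μ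
  have hdenpos : ∀ s ∈ Icc (0:ℝ) 1, 0 < den s := by
    intro s hs
    obtain ⟨μ, hμt, hμs⟩ := mem_iUnion₂.1 (ht hs)
    exact Finset.sum_pos' (fun ν _ => hddnonneg ν s) ⟨μ, hμt, hddpos μ s hμs⟩
  set cl : ℝ → ℝ := fun u => max 0 (min 1 u) with hcl
  have hclcont : Continuous cl := continuous_const.max (continuous_const.min continuous_id)
  have hclmem : ∀ u, cl u ∈ Icc (0:ℝ) 1 := fun u =>
    ⟨le_max_left _ _, max_le (by norm_num) (min_le_left _ _)⟩
  have hclid : ∀ u ∈ Icc (0:ℝ) 1, cl u = u := by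
    intro u hu
    rw [hcl]
    simp only
    rw [min_eq_right hu.2, max_eq_right hu.1]
  set p : ℝ → ℝ := fun u => (∑ μ ∈ t, dd μ (cl u) * μ) / den (cl u) with hp
  have hpcont : Continuous p := by
    apply Continuous.div
    · exact (continuous_finset_sum _ fun μ _ => (hddcont μ).mul continuous_const).comp' hclcont
    · exact hdencont.comp' hclcont
    · exact fun u => (hdenpos _ (hclmem u)).ne'
  refine ⟨p, hpcont, ?_, ?_⟩
  · -- boundedness
    obtain ⟨u₀, _, hmax⟩ := (isCompact_Icc (a := (0:ℝ)) (b := 1)).exists_isMaxOn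
      (nonempty_Icc.2 zero_le_one) hpcont.abs.continuousOn
    refine ⟨|p u₀|, fun u => ?_⟩
    have : p u = p (cl u) := by
      rw [hp]
      simp only
      rw [hclid (cl u) (hclmem u)]
    rw [this]
    exact hmax (hclmem u)
  · -- the bound
    intro s hs
    have hcls : cl s = s := hclid s hs
    have hw : ∀ μ ∈ t, 0 ≤ dd μ s / den s := fun μ _ =>
      div_nonneg (hddnonneg μ s) (hdenpos s hs).le
    have hwsum : ∑ μ ∈ t, dd μ s / den s = 1 := by
      rw [← Finset.sum_div]
      have hds : ∑ μ ∈ t, dd μ s = den s := rfl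
      rw [hds, div_self (hdenpos s hs).ne']
    have hps : p s = ∑ μ ∈ t, (dd μ s / den s) • μ := by
      rw [hp]
      simp only [hcls, smul_eq_mul, div_mul_eq_mul_div, ← Finset.sum_div]
    have hjensen : H s (p s) ≤ ∑ μ ∈ t, (dd μ s / den s) * H s μ := by
      rw [hps]
      exact ConvexOn.map_sum_le (hH.convex s hs) hw hwsum (fun μ _ => trivial)
    have hterm : ∀ μ ∈ t, (dd μ s / den s) * H s μ ≤ (dd μ s / den s) * (M + ε) := by
      intro μ hμ
      rcases eq_or_lt_of_le (hddnonneg μ s) with h0 | hpos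
      · rw [← h0]
        simp
      · apply mul_le_mul_of_nonneg_left _ (hw μ hμ)
        have hsO' : s ∈ O' μ := by
          by_contra hno
          exact absurd (hddzero μ s hno) (ne_of_gt hpos)
        have : s ∈ (fun s => H s μ) ⁻¹' (Iio (M + ε)) ∩ Icc 0 1 := by
          rw [hOeq μ]
          exact ⟨hsO'.1, hs⟩
        exact (le_of_lt this.1)
    calc H s (p s) ≤ ∑ μ ∈ t, (dd μ s / den s) * H s μ := hjensen
      _ ≤ ∑ μ ∈ t, (dd μ s / den s) * (M + ε) := Finset.sum_le_sum hterm
      _ = M + ε := by rw [← Finset.sum_mul, hwsum, one_mul]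

end AuxLemmas

open Set MeasureTheory Filter Topology in
set_option maxHeartbeats 1600000 in
/-- Let `x ∈ V`, `γ ∈ Γ_x` and let `ξ : [a,b] → γ([0,1])` be an absolutely
continuous curve with `ξ(a) = ξ(b)` which avoids all vertices except possibly `x`. Then
`∫_a^b L(ξ,ξ̇) dτ ≥ c_x (b - a)`. -/
theorem stmt7 {N : ℕ} (Γ : EmbNetwork N) (H : Arc N → ℝ → ℝ → ℝ)
    (hH : IsNetworkHamiltonian Γ H) (c : EucN N → ℝ) (hc : IsFluxLimiter Γ H c)
    (x : EucN N) (hx : x ∈ Γ.V) (γ : Arc N) (hγ : γ ∈ Γ.arcs) (hγx : γ.toFun 1 = x)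
    (a b : ℝ) (hab : a ≤ b) (ξ ξ' : ℝ → EucN N) (hAC : IsACDerivOn a b ξ ξ')
    (hend : ξ a = ξ b) (hsupp : ∀ t ∈ Icc a b, ξ t ∈ γ.toFun '' Icc 0 1)
    (hV : ∀ t ∈ Icc a b, ξ t ∉ Γ.V \ {x}) :
    eAction Γ H c a b ξ ξ' ≥ ((c x * (b - a) : ℝ) : EReal) := by
  rcases eq_or_lt_of_le hab with rfl | hlt
  · rw [eAction, eIntegral]
    split_ifs with h
    · simp
    · exact le_top
  rw [eAction, eIntegral]
  split_ifs with hcond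
  swap
  · exact le_top
  obtain ⟨hInt, hFin⟩ := hcond
  rw [ge_iff_le, EReal.coe_le_coe_iff]
  -- ====== setup ======
  set h : ℝ → EucN N := (Icc a b).indicator ξ' with hhdef
  have hh_int : Integrable h := (hAC.1).integrable_indicator measurableSet_Icc
  set η : ℝ → EucN N := fun t => ξ a + ∫ u in a..t, h u with hηdef
  have hηcont : Continuous η := continuous_const.add
    (intervalIntegral.continuous_primitive (fun u v => hh_int.intervalIntegrable) a)
  have hηξ : ∀ t ∈ Icc a b, η t = ξ t := by
    intro t ht
    rw [hηdef]
    simp only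
    rw [hAC.2 t ht]
    congr 1
    apply intervalIntegral.integral_congr
    intro u hu
    rw [uIcc_of_le ht.1] at hu
    exact indicator_of_mem (Icc_subset_Icc_right ht.2 hu) ξ'
  set cl : ℝ → ℝ := fun t => max a (min b t) with hcldef
  have hclmem : ∀ t, cl t ∈ Icc a b := fun t =>
    ⟨le_max_left _ _, max_le hab (min_le_left _ _)⟩
  have hclid : ∀ t ∈ Icc a b, cl t = t := by
    intro t ht
    rw [hcldef]
    simp only
    rw [min_eq_right ht.2, max_eq_right ht.1]
  set σ : ℝ → ℝ := fun t => Function.invFunOn γ.toFun (Icc 0 1) (ξ (cl t)) with hσdef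
  have hσspec : ∀ t ∈ Icc a b, σ t ∈ Icc (0:ℝ) 1 ∧ γ.toFun (σ t) = ξ t := by
    intro t ht
    obtain ⟨s, hs, hsx⟩ := hsupp t ht
    have heq : σ t = Function.invFunOn γ.toFun (Icc 0 1) (ξ t) := by
      rw [hσdef]
      simp only
      rw [hclid t ht]
    exact ⟨heq ▸ Function.invFunOn_mem ⟨s, hs, hsx⟩,
      heq ▸ Function.invFunOn_eq ⟨s, hs, hsx⟩⟩
  obtain ⟨c₀, hc₀, hlip⟩ := γ.exists_lowerLip
  have hγ01 : γ.toFun 0 ≠ x := by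
    rw [← hγx]
    intro h0
    have := γ.injOn (left_mem_Icc.2 zero_le_one) (right_mem_Icc.2 zero_le_one) h0
    norm_num at this
  have hγ0V : γ.toFun 0 ∈ Γ.V := ⟨γ, hγ, Or.inl rfl⟩
  have hσ0 : ∀ t ∈ Icc a b, σ t ≠ 0 := by
    intro t ht h0
    have h1 := (hσspec t ht).2
    rw [h0] at h1
    exact hV t ht ⟨h1 ▸ hγ0V, fun hxx => hγ01 (h1.symm ▸ hxx)⟩
  have hσ1 : ∀ t ∈ Icc a b, (ξ t = x ↔ σ t = 1) := by
    intro t ht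
    constructor
    · intro he
      apply γ.injOn (hσspec t ht).1 (right_mem_Icc.2 zero_le_one)
      rw [(hσspec t ht).2, hγx, he]
    · intro he
      rw [← (hσspec t ht).2, he, hγx]
  have hnoV : ∀ t ∈ Icc a b, σ t ∈ Ioo (0:ℝ) 1 → ξ t ∉ Γ.V := by
    intro t ht hIoo hmem
    obtain ⟨δ, hδ, hor⟩ := hmem
    have := Γ.no_vertex_inside γ hγ δ hδ (σ t) hIoo
    rw [(hσspec t ht).2] at this
    rcases hor with h1 | h1
    · exact this.1 h1.symm
    · exact this.2 h1.symm
  -- lam and a.e. structure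
  set lam : ℝ → ℝ := fun τ => (inner ℝ (ξ' τ) (γ.deriv (σ τ)) : ℝ) / ‖γ.deriv (σ τ)‖ ^ 2
    with hlamdef
  have hgood : ∀ᵐ τ, τ ∈ Ioo a b →
      HasDerivAt σ (lam τ) τ ∧ ξ' τ = lam τ • γ.deriv (σ τ) := by
    filter_upwards [ae_hasDerivAt_primitive h hh_int a] with τ hprim hIoo
    have hτIcc : τ ∈ Icc a b := Ioo_subset_Icc_self hIoo
    have hητ : HasDerivAt η (ξ' τ) τ := by
      have : HasDerivAt η (h τ) τ := hprim.const_add (ξ a)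
      rwa [hhdef, indicator_of_mem hτIcc] at this
    exact sigma_hasDerivAt γ c₀ hc₀ hlip η σ τ (Ioo a b) (isOpen_Ioo.mem_nhds hIoo)
      (fun t htI => (hσspec t (Ioo_subset_Icc_self htI)).1)
      (fun t htI => by
        rw [(hσspec t (Ioo_subset_Icc_self htI)).2, hηξ t (Ioo_subset_Icc_self htI)])
      (ξ' τ) hητ
  -- global continuity of σ
  have hσspec' : ∀ t : ℝ, σ t ∈ Icc (0:ℝ) 1 ∧ γ.toFun (σ t) = ξ (cl t) := by
    intro t
    have h1 := hσspec (cl t) (hclmem t)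
    have h2 : σ (cl t) = σ t := by
      rw [hσdef]
      simp only
      rw [hclid (cl t) (hclmem t)]
    rw [h2] at h1
    exact h1
  have hσlipG : ∀ t t' : ℝ, |σ t - σ t'| ≤ c₀⁻¹ * ‖η (cl t) - η (cl t')‖ := by
    intro t t'
    have h1 := hlip (σ t) (hσspec' t).1 (σ t') (hσspec' t').1
    rw [(hσspec' t).2, (hσspec' t').2, ← hηξ _ (hclmem t), ← hηξ _ (hclmem t')] at h1
    rw [← le_div_iff₀' hc₀] at h1
    rw [div_eq_inv_mul] at h1
    exact h1
  have hclcont : Continuous cl := continuous_const.max (continuous_const.min continuous_id)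
  have hσcontG : Continuous σ := by
    rw [Metric.continuous_iff]
    intro t ε hε
    have hcc : Continuous fun u => η (cl u) := hηcont.comp hclcont
    rw [Metric.continuous_iff] at hcc
    obtain ⟨δ, hδpos, hδ⟩ := hcc t (c₀ * ε) (by positivity)
    refine ⟨δ, hδpos, fun t' ht' => ?_⟩
    have h2 := hσlipG t' t
    rw [Real.dist_eq]
    calc |σ t' - σ t| ≤ c₀⁻¹ * ‖η (cl t') - η (cl t)‖ := h2
      _ = c₀⁻¹ * dist (η (cl t')) (η (cl t)) := by rw [dist_eq_norm]
      _ < c₀⁻¹ * (c₀ * ε) := by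
          apply mul_lt_mul_of_pos_left (hδ t' ht') (inv_pos.2 hc₀)
      _ = ε := by field_simp
  -- minimum of ‖γ.deriv‖
  obtain ⟨s₀m, hs₀m, hmins⟩ := isCompact_Icc.exists_isMinOn (nonempty_Icc.2 zero_le_one)
    (continuous_norm.comp_continuousOn γ.contDeriv)
  set m : ℝ := ‖γ.deriv s₀m‖ with hmdef
  have hmpos : 0 < m := norm_pos_iff.2 (γ.deriv_ne_zero s₀m hs₀m)
  have hmle : ∀ s ∈ Icc (0:ℝ) 1, m ≤ ‖γ.deriv s‖ := fun s hs => hmins hs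
  -- bound for lam
  have hlambd : ∀ τ : ℝ, |lam τ| ≤ m⁻¹ * ‖ξ' τ‖ := by
    intro τ
    rw [hlamdef]
    simp only
    rw [abs_div]
    have hd0 : 0 < ‖γ.deriv (σ τ)‖ := norm_pos_iff.2 (γ.deriv_ne_zero _ (hσspec' τ).1)
    have habspow : |‖γ.deriv (σ τ)‖ ^ 2| = ‖γ.deriv (σ τ)‖ ^ 2 := abs_of_pos (by positivity)
    rw [habspow, div_le_iff₀ (by positivity)]
    calc |(inner ℝ (ξ' τ) (γ.deriv (σ τ)) : ℝ)| ≤ ‖ξ' τ‖ * ‖γ.deriv (σ τ)‖ :=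
          abs_real_inner_le_norm _ _
      _ ≤ m⁻¹ * ‖ξ' τ‖ * ‖γ.deriv (σ τ)‖ ^ 2 := by
          rw [pow_two, ← mul_assoc]
          apply mul_le_mul_of_nonneg_right _ (norm_nonneg _)
          rw [mul_comm (m⁻¹) _, mul_assoc]
          nth_rewrite 1 [← mul_one ‖ξ' τ‖]
          apply mul_le_mul_of_nonneg_left _ (norm_nonneg _)
          rw [← div_eq_inv_mul, le_div_iff₀ hmpos, one_mul]
          exact hmle _ (hσspec' τ).1
  have hlammeas : AEStronglyMeasurable lam (volume.restrict (Icc a b)) := by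
    have h1 : AEStronglyMeasurable ξ' (volume.restrict (Icc a b)) :=
      hAC.1.aestronglyMeasurable
    have h2 : Continuous fun τ => γ.deriv (σ τ) := by
      apply ContinuousOn.comp_continuous γ.contDeriv hσcontG
      exact fun τ => (hσspec' τ).1
    have h3 : AEStronglyMeasurable (fun τ => (inner ℝ (ξ' τ) (γ.deriv (σ τ)) : ℝ))
        (volume.restrict (Icc a b)) := h1.inner h2.aestronglyMeasurable
    have h4 : AEStronglyMeasurable (fun τ => ‖γ.deriv (σ τ)‖ ^ 2)
        (volume.restrict (Icc a b)) := (h2.norm.pow 2).aestronglyMeasurable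
    rw [hlamdef]
    exact (h3.aemeasurable.div h4.aemeasurable).aestronglyMeasurable
  -- vertex facts
  set E : Set ℝ := Icc a b ∩ η ⁻¹' {x} with hEdef
  have hEsub : E ⊆ Icc a b := inter_subset_left
  have hEmeas : MeasurableSet E :=
    (isClosed_Icc.inter (isClosed_singleton.preimage hηcont)).measurableSet
  have hEmem : ∀ t, t ∈ E ↔ t ∈ Icc a b ∧ ξ t = x := by
    intro t
    rw [hEdef]
    simp only [mem_inter_iff, mem_preimage, mem_singleton_iff]
    constructor
    · rintro ⟨ht, hx'⟩
      exact ⟨ht, by rw [← hηξ t ht]; exact hx'⟩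
    · rintro ⟨ht, hx'⟩
      exact ⟨ht, by rw [hηξ t ht]; exact hx'⟩
  have hvertex : ∀ᵐ τ, τ ∈ Ioo a b → ξ τ = x → (lam τ = 0 ∧ ξ' τ = 0) := by
    filter_upwards [hgood] with τ hg hIoo hxx
    obtain ⟨hd, htan⟩ := hg hIoo
    have hmax : IsLocalMax σ τ := by
      filter_upwards [isOpen_Ioo.mem_nhds hIoo] with t htI
      have h1 := (hσspec t (Ioo_subset_Icc_self htI)).1.2
      have h2 : σ τ = 1 := (hσ1 τ (Ioo_subset_Icc_self hIoo)).1 hxx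
      rw [h2]
      exact h1
    have h0 : lam τ = 0 := hmax.hasDerivAt_eq_zero hd
    exact ⟨h0, by rw [htan, h0, zero_smul]⟩
  have hElag_vertex : ∀ τ : ℝ, ξ τ = x → ξ' τ = 0 →
      (eLag Γ H c (ξ τ) (ξ' τ)).toReal = c x := by
    intro τ hxx h0
    rw [hxx, h0, eLag, if_pos hx, if_pos rfl, EReal.toReal_coe]
  -- constants
  set M : ℝ := -cHam (H γ) with hMdef
  have hHγ : IsHamiltonian (H γ) := hH.isHam γ hγ
  have hcxM : c x ≤ -M := by
    rw [hMdef, neg_neg]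
    exact hc x hx γ hγ hγx
  set F : ℝ → ℝ := fun τ => (eLag Γ H c (ξ τ) (ξ' τ)).toReal with hFdef
  have hab' : (0:ℝ) ≤ b - a := by linarith
  have hab2 : volume ({a, b} : Set ℝ) = 0 :=
    ((Set.finite_singleton b).insert a).measure_zero volume
  have hnab : ∀ᵐ τ : ℝ, τ ∉ ({a, b} : Set ℝ) := (measure_eq_zero_iff_ae_notMem).1 hab2
  have hIccIoo : ∀ τ : ℝ, τ ∈ Icc a b → τ ∉ ({a, b} : Set ℝ) → τ ∈ Ioo a b := by
    intro τ h1 h2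
    simp only [mem_insert_iff, mem_singleton_iff, not_or] at h2
    exact ⟨lt_of_le_of_ne h1.1 (Ne.symm h2.1), lt_of_le_of_ne h1.2 h2.2⟩
  -- main epsilon-estimate
  have hmain : ∀ ε : ℝ, 0 < ε → c x * (b - a) - ε * (b - a) ≤ ∫ τ in Icc a b, F τ := by
    intro ε hε
    obtain ⟨p, hpc, ⟨B, hBp⟩, hpM⟩ := hHγ.exists_momentum hε
    have hB0 : 0 ≤ B := le_trans (abs_nonneg _) (hBp 0)
    have hpM' : ∀ s ∈ Icc (0:ℝ) 1, H γ s (p s) ≤ M + ε := fun s hs => hpM s hs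
    set φ : ℝ → ℝ := fun τ => p (σ τ) * lam τ with hφdef
    have hφmeas : AEStronglyMeasurable φ (volume.restrict (Icc a b)) :=
      ((hpc.comp hσcontG).aestronglyMeasurable).mul hlammeas
    have hφbd : ∀ τ, ‖φ τ‖ ≤ B * m⁻¹ * ‖ξ' τ‖ := by
      intro τ
      rw [hφdef]
      simp only [Real.norm_eq_abs, abs_mul]
      calc |p (σ τ)| * |lam τ| ≤ B * (m⁻¹ * ‖ξ' τ‖) :=
            mul_le_mul (hBp _) (hlambd τ) (abs_nonneg _) hB0
        _ = B * m⁻¹ * ‖ξ' τ‖ := by ring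
    have hφint : IntegrableOn φ (Icc a b) := by
      apply Integrable.mono' ((hAC.1.norm).const_mul (B * m⁻¹)) hφmeas
      exact Eventually.of_forall (fun τ => hφbd τ)
    -- pointwise interior bound
    have hinterior : ∀ τ ∈ Ioo a b, ξ τ ≠ x → ξ' τ = lam τ • γ.deriv (σ τ) →
        φ τ - (M + ε) ≤ F τ := by
      intro τ hIoo hne htan
      have hτIcc : τ ∈ Icc a b := Ioo_subset_Icc_self hIoo
      have hsmem := (hσspec τ hτIcc).1
      have hsval := (hσspec τ hτIcc).2
      have hsIoo : σ τ ∈ Ioo (0:ℝ) 1 :=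
        ⟨lt_of_le_of_ne hsmem.1 (Ne.symm (hσ0 τ hτIcc)),
         lt_of_le_of_ne hsmem.2 (fun h1 => hne ((hσ1 τ hτIcc).2 h1))⟩
      have hnV : ξ τ ∉ Γ.V := hnoV τ hτIcc hsIoo
      have hEx : ∃ δ ∈ Γ.arcs, ∃ s' ∈ Ioo (0:ℝ) 1, δ.toFun s' = ξ τ ∧
          ∃ l : ℝ, ξ' τ = l • δ.deriv s' :=
        ⟨γ, hγ, σ τ, hsIoo, hsval, lam τ, htan⟩
      have hFτ : F τ = sInf {v : ℝ | ∃ δ ∈ Γ.arcs, ∃ s' ∈ Ioo (0:ℝ) 1, δ.toFun s' = ξ τ ∧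
          (∃ l : ℝ, ξ' τ = l • δ.deriv s') ∧
          v = Lagr (H δ) s' ((inner ℝ (ξ' τ) (δ.deriv s') : ℝ) / ‖δ.deriv s'‖ ^ 2)} := by
        rw [hFdef]
        simp only
        rw [eLag, if_neg hnV, if_pos hEx, EReal.toReal_coe]
      rw [hFτ]
      apply le_csInf
      · exact ⟨_, γ, hγ, σ τ, hsIoo, hsval, ⟨lam τ, htan⟩, rfl⟩
      · rintro v ⟨δ, hδ, s', hs'Ioo, hs'eq, ⟨l, hl⟩, rfl⟩
        have hs'Icc : s' ∈ Icc (0:ℝ) 1 := Ioo_subset_Icc_self hs'Ioo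
        have hσIcc : σ τ ∈ Icc (0:ℝ) 1 := Ioo_subset_Icc_self hsIoo
        by_cases hδγ : δ = γ
        · subst hδγ
          have hs'σ : s' = σ τ := δ.injOn hs'Icc hsmem (by rw [hs'eq, hsval])
          rw [hs'σ]
          have hlam_eq : (inner ℝ (ξ' τ) (δ.deriv (σ τ)) : ℝ) / ‖δ.deriv (σ τ)‖ ^ 2 = lam τ := by
            rw [hlamdef]
          rw [hlam_eq]
          have h1 := (hH.isHam δ hδ).le_Lagr hσIcc (lam τ) (p (σ τ))
          have h2 := hpM' (σ τ) hσIcc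
          have h3 : φ τ = p (σ τ) * lam τ := by rw [hφdef]
          have h4 : lam τ * p (σ τ) = p (σ τ) * lam τ := mul_comm _ _
          linarith
        · have hInv : Arc.IsInverse δ γ := by
            by_contra hnInv
            have hdisj := Γ.disj δ hδ γ hγ hδγ hnInv
            rw [eq_empty_iff_forall_notMem] at hdisj
            exact hdisj (ξ τ) ⟨⟨s', hs'Ioo, hs'eq⟩, ⟨σ τ, hsmem, hsval⟩⟩
          have hInv' : Arc.IsInverse γ δ := by
            intro u hu
            have h1 := hInv (1 - u) ⟨by linarith [hu.2], by linarith [hu.1]⟩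
            rw [show (1:ℝ) - (1 - u) = u by ring] at h1
            exact h1.symm
          have h1s' : (1:ℝ) - s' ∈ Icc (0:ℝ) 1 :=
            ⟨by linarith [hs'Icc.2], by linarith [hs'Icc.1]⟩
          have hs'σ : 1 - s' = σ τ := by
            apply γ.injOn h1s' hsmem
            rw [← hInv' s' hs'Icc, hs'eq, hsval]
          have hδderiv : δ.deriv s' = -γ.deriv (σ τ) := by
            have hmaps : MapsTo (fun u : ℝ => 1 - u) (Icc 0 1) (Icc 0 1) := by
              intro u hu
              simp only [mem_Icc] at hu ⊢
              constructor
              · linarith [hu.2]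
              · linarith [hu.1]
            have hinner : HasDerivWithinAt (fun u : ℝ => 1 - u) (-1 : ℝ) (Icc 0 1) s' := by
              simpa using (hasDerivWithinAt_id s' (Icc (0:ℝ) 1)).const_sub 1
            have houter : HasDerivWithinAt γ.toFun (γ.deriv (1 - s')) (Icc 0 1)
                ((fun u : ℝ => 1 - u) s') := γ.hasDeriv (1 - s') h1s'
            have hcomp := HasDerivWithinAt.scomp s' houter hinner hmaps
            have hδd : HasDerivWithinAt δ.toFun ((-1 : ℝ) • γ.deriv (1 - s')) (Icc 0 1) s' := by
              apply hcomp.congr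
              · intro u hu
                exact hInv' u hu
              · exact hInv' s' hs'Icc
            have u1 := (δ.hasDeriv s' hs'Icc).derivWithin
              ((uniqueDiffOn_Icc zero_lt_one) s' hs'Icc)
            have u2 := hδd.derivWithin ((uniqueDiffOn_Icc zero_lt_one) s' hs'Icc)
            rw [← u1, u2, hs'σ, neg_one_smul]
          have hval : (inner ℝ (ξ' τ) (δ.deriv s') : ℝ) / ‖δ.deriv s'‖ ^ 2 = -lam τ := by
            rw [hδderiv, inner_neg_right, norm_neg, hlamdef, neg_div]
          rw [hval]
          have hHδ := hH.isHam δ hδ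
          have h1 := hHδ.le_Lagr hs'Icc (-lam τ) (-(p (σ τ)))
          have hcompat := hH.compat γ hγ δ hδ hInv' s' hs'Icc (-(p (σ τ)))
          rw [neg_neg, hs'σ] at hcompat
          have h2 := hpM' (σ τ) hσIcc
          have h3 : φ τ = p (σ τ) * lam τ := by rw [hφdef]
          have h4 : -lam τ * -(p (σ τ)) = p (σ τ) * lam τ := by ring
          linarith
    -- the primitive of p
    set P : ℝ → ℝ := fun u => ∫ v in (0:ℝ)..u, p v with hPdef
    have hPd : ∀ u : ℝ, HasDerivAt P (p u) u := by
      intro u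
      exact intervalIntegral.integral_hasDerivAt_right (hpc.intervalIntegrable 0 u)
        (hpc.stronglyMeasurableAtFilter _ _) hpc.continuousAt
    have hPlip : ∀ u v : ℝ, |P u - P v| ≤ B * |u - v| := by
      intro u v
      have h1 : P u - P v = ∫ w in v..u, p w := by
        rw [hPdef]
        simp only
        rw [← intervalIntegral.integral_add_adjacent_intervals
          (hpc.intervalIntegrable 0 v) (hpc.intervalIntegrable v u)]
        abel
      rw [h1]
      have h2 := intervalIntegral.norm_integral_le_of_norm_le_const (C := B) (f := p)
        (a := v) (b := u) (fun w _ => by simpa using hBp w)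
      rwa [Real.norm_eq_abs] at h2
    -- the dominating primitive
    set g : ℝ → ℝ := fun v => (B / c₀) * ‖h v‖ with hgdef
    have hgint : Integrable g := hh_int.norm.const_mul _
    have hgnonneg : ∀ v, 0 ≤ g v := fun v => mul_nonneg (div_nonneg hB0 hc₀.le) (norm_nonneg _)
    set A : ℝ → ℝ := fun t => ∫ v in a..t, g v with hAdef
    set f : ℝ → ℝ := fun t => A (cl t) - P (σ t) with hfdef
    have hclmono : Monotone cl := fun u v huv =>
      max_le_max le_rfl (min_le_min le_rfl huv)
    have hAd : ∀ u v : ℝ, A v - A u = ∫ w in u..v, g w := by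
      intro u v
      rw [hAdef]
      simp only
      rw [← intervalIntegral.integral_add_adjacent_intervals
        (hgint.intervalIntegrable) (hgint.intervalIntegrable) (a := a) (b := u) (c := v)]
      abel
    have hηd : ∀ u v : ℝ, η v - η u = ∫ w in u..v, h w := by
      intro u v
      rw [hηdef]
      simp only
      rw [← intervalIntegral.integral_add_adjacent_intervals
        (hh_int.intervalIntegrable) (hh_int.intervalIntegrable) (a := a) (b := u) (c := v)]
      abel
    have hmono : Monotone f := by
      intro u v huv
      have hcls : cl u ≤ cl v := hclmono huv
      have hPbd : |P (σ v) - P (σ u)| ≤ A (cl v) - A (cl u) := by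
        calc |P (σ v) - P (σ u)| ≤ B * |σ v - σ u| := hPlip _ _
          _ ≤ B * (c₀⁻¹ * ‖η (cl v) - η (cl u)‖) := by
              apply mul_le_mul_of_nonneg_left (hσlipG v u) hB0
          _ = (B / c₀) * ‖∫ w in (cl u)..(cl v), h w‖ := by
              rw [hηd]
              ring
          _ ≤ (B / c₀) * ∫ w in (cl u)..(cl v), ‖h w‖ := by
              apply mul_le_mul_of_nonneg_left _ (div_nonneg hB0 hc₀.le)
              exact intervalIntegral.norm_integral_le_integral_norm hcls
          _ = ∫ w in (cl u)..(cl v), g w := by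
              rw [hgdef, intervalIntegral.integral_const_mul]
          _ = A (cl v) - A (cl u) := (hAd _ _).symm
      rw [hfdef]
      simp only
      have h5 := (abs_le.1 hPbd).2
      linarith
    have hcb : ∀ t : ℝ, b ≤ t → f t = f b := by
      intro t ht
      have hclt : cl t = b := by
        rw [hcldef]
        simp only
        rw [min_eq_left ht, max_eq_right hab]
      have hclb : cl b = b := hclid b (right_mem_Icc.2 hab)
      rw [hfdef]
      simp only
      rw [hσdef]
      simp only
      rw [hclt, hclb]
    set ψ : ℝ → ℝ := (Ioo a b).indicator (fun τ => g τ - φ τ) with hψdef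
    have hfd : ∀ᵐ τ : ℝ, HasDerivAt f (ψ τ) τ := by
      filter_upwards [hgood, ae_hasDerivAt_primitive g hgint a, hnab]
        with τ hgd hprim hτnab
      by_cases hIoo : τ ∈ Ioo a b
      · obtain ⟨hσd, htan⟩ := hgd hIoo
        have hA : HasDerivAt (fun t => A (cl t)) (g τ) τ := by
          have hprim' : HasDerivAt A (g τ) τ := hprim
          apply hprim'.congr_of_eventuallyEq
          filter_upwards [isOpen_Ioo.mem_nhds hIoo] with t htI
          rw [hclid t (Ioo_subset_Icc_self htI)]
        have hPσ : HasDerivAt (fun t => P (σ t)) (p (σ τ) * lam τ) τ := (hPd (σ τ)).comp τ hσd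
        have hψτ : ψ τ = g τ - φ τ := indicator_of_mem hIoo _
        rw [hψτ]
        exact hA.sub hPσ
      · have hψτ : ψ τ = 0 := indicator_of_notMem hIoo _
        rw [hψτ]
        have hτout : τ < a ∨ b < τ := by
          simp only [mem_Ioo, not_and_or, not_lt] at hIoo
          simp only [mem_insert_iff, mem_singleton_iff, not_or] at hτnab
          rcases hIoo with h1 | h1
          · left
            exact lt_of_le_of_ne h1 hτnab.1
          · right
            exact lt_of_le_of_ne h1 (Ne.symm hτnab.2)
        rcases hτout with h1 | h1
        · apply HasDerivAt.congr_of_eventuallyEq (hasDerivAt_const τ (A a - P (σ a)))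
          filter_upwards [Iio_mem_nhds h1] with t htI
          have hclt : cl t = a := by
            rw [hcldef]
            simp only
            rw [min_eq_right (le_of_lt (lt_of_lt_of_le htI hab)), max_eq_left (le_of_lt htI)]
          have hσt : σ t = σ a := by
            rw [hσdef]
            simp only
            rw [hclt, hclid a (left_mem_Icc.2 hab)]
          rw [hfdef]
          simp only
          rw [hclt, hσt]
        · apply HasDerivAt.congr_of_eventuallyEq (hasDerivAt_const τ (A b - P (σ b)))
          filter_upwards [Ioi_mem_nhds h1] with t htI
          have hclt : cl t = b := by
            rw [hcldef]
            simp only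
            rw [min_eq_left (le_of_lt htI), max_eq_right hab]
          have hσt : σ t = σ b := by
            rw [hσdef]
            simp only
            rw [hclt, hclid b (right_mem_Icc.2 hab)]
          rw [hfdef]
          simp only
          rw [hclt, hσt]
    have hψint : IntegrableOn ψ (Icc a b) := by
      have h1 : IntegrableOn (fun τ => g τ - φ τ) (Ioo a b) :=
        (hgint.integrableOn.mono_set Ioo_subset_Icc_self).sub (hφint.mono_set Ioo_subset_Icc_self)
      have h2 : Integrable ψ volume := h1.integrable_indicator measurableSet_Ioo
      exact h2.integrableOn
    have hkey := monotone_integral_deriv_le hab f ψ hmono hcb hfd hψint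
    have hσab : σ b = σ a := by
      rw [hσdef]
      simp only
      rw [hclid a (left_mem_Icc.2 hab), hclid b (right_mem_Icc.2 hab), hend]
    have hfba : f b - f a = ∫ τ in Icc a b, g τ := by
      rw [hfdef]
      simp only
      rw [hσab, hclid a (left_mem_Icc.2 hab), hclid b (right_mem_Icc.2 hab)]
      have hAa : A a = 0 := by
        rw [hAdef]
        simp only
        exact intervalIntegral.integral_same
      have hAb : A b = ∫ τ in Icc a b, g τ := by
        rw [hAdef]
        simp only
        rw [intervalIntegral.integral_of_le hab, integral_Icc_eq_integral_Ioc]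
      rw [hAa, hAb]
      ring
    have hψeq : ∫ τ in Icc a b, ψ τ = (∫ τ in Icc a b, g τ) - ∫ τ in Icc a b, φ τ := by
      have h1 : ∫ τ in Icc a b, ψ τ = ∫ τ in Icc a b, (g τ - φ τ) := by
        apply integral_congr_ae
        filter_upwards [ae_restrict_mem measurableSet_Icc, ae_restrict_of_ae hnab]
          with τ hτIcc hτnab
        exact indicator_of_mem (hIccIoo τ hτIcc hτnab) _
      rw [h1, integral_sub hgint.integrableOn hφint]
    have hφpos : (0:ℝ) ≤ ∫ τ in Icc a b, φ τ := by
      rw [hfba] at hkey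
      rw [hψeq] at hkey
      linarith
    -- splitting the integral
    have hFE : ∀ᵐ τ ∂(volume.restrict E), F τ = c x ∧ φ τ = 0 := by
      filter_upwards [ae_restrict_mem hEmeas, ae_restrict_of_ae hvertex,
        ae_restrict_of_ae hnab] with τ hτE hτv hτnab
      obtain ⟨hτIcc, hτx⟩ := (hEmem τ).1 hτE
      have hτIoo : τ ∈ Ioo a b := hIccIoo τ hτIcc hτnab
      obtain ⟨hl0, hx0⟩ := hτv hτIoo hτx
      refine ⟨hElag_vertex τ hτx hx0, ?_⟩
      rw [hφdef]
      simp only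
      rw [hl0, mul_zero]
    have hSmeas : MeasurableSet (Icc a b \ E) := measurableSet_Icc.diff hEmeas
    have hFsplit : ∫ τ in Icc a b, F τ = (∫ τ in E, F τ) + ∫ τ in Icc a b \ E, F τ := by
      rw [← setIntegral_union disjoint_sdiff_self_right hSmeas
        (hInt.mono_set hEsub) (hInt.mono_set diff_subset), union_diff_cancel hEsub]
    have hφsplit : ∫ τ in Icc a b, φ τ = (∫ τ in E, φ τ) + ∫ τ in Icc a b \ E, φ τ := by
      rw [← setIntegral_union disjoint_sdiff_self_right hSmeas
        (hφint.mono_set hEsub) (hφint.mono_set diff_subset), union_diff_cancel hEsub]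
    have hEF : ∫ τ in E, F τ = c x * (volume E).toReal := by
      have e1 : (fun τ => F τ) =ᶠ[ae (volume.restrict E)] (fun _ => c x) := by
        filter_upwards [hFE] with τ hh
        exact hh.1
      rw [integral_congr_ae e1, setIntegral_const, measureReal_def, smul_eq_mul, mul_comm]
    have hEφ : ∫ τ in E, φ τ = 0 := by
      have e2 : (fun τ => φ τ) =ᶠ[ae (volume.restrict E)] (fun _ => (0:ℝ)) := by
        filter_upwards [hFE] with τ hh
        exact hh.2
      rw [integral_congr_ae e2]
      exact integral_zero _ _
    have hvolE : volume E ≠ ⊤ :=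
      ne_top_of_le_ne_top (by rw [Real.volume_Icc]; exact ENNReal.ofReal_ne_top)
        (measure_mono hEsub)
    have hvolS : volume (Icc a b \ E) ≠ ⊤ :=
      ne_top_of_le_ne_top (by rw [Real.volume_Icc]; exact ENNReal.ofReal_ne_top)
        (measure_mono diff_subset)
    have hvolsum : (volume E).toReal + (volume (Icc a b \ E)).toReal = b - a := by
      rw [← ENNReal.toReal_add hvolE hvolS, ← measure_union disjoint_sdiff_self_right hSmeas,
        union_diff_cancel hEsub, Real.volume_Icc, ENNReal.toReal_ofReal hab']
    have hlow : ∀ᵐ τ ∂(volume.restrict (Icc a b \ E)), φ τ - (M + ε) ≤ F τ := by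
      filter_upwards [ae_restrict_mem hSmeas, ae_restrict_of_ae hgood,
        ae_restrict_of_ae hnab] with τ hτm hτg hτnab
      obtain ⟨hτIcc, hτE⟩ := hτm
      have hτIoo : τ ∈ Ioo a b := hIccIoo τ hτIcc hτnab
      have hτx : ξ τ ≠ x := fun hh => hτE ((hEmem τ).2 ⟨hτIcc, hh⟩)
      exact hinterior τ hτIoo hτx (hτg hτIoo).2
    have hlowint : ∫ τ in Icc a b \ E, (φ τ - (M + ε)) ≤ ∫ τ in Icc a b \ E, F τ := by
      apply integral_mono_ae ((hφint.mono_set diff_subset).sub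
        (integrableOn_const hvolS))
        (hInt.mono_set diff_subset) hlow
    have hconstint : ∫ τ in Icc a b \ E, (φ τ - (M + ε))
        = (∫ τ in Icc a b \ E, φ τ) - (M + ε) * (volume (Icc a b \ E)).toReal := by
      rw [integral_sub (hφint.mono_set diff_subset)
        (integrableOn_const hvolS), setIntegral_const, measureReal_def,
        smul_eq_mul, mul_comm]
    have hvE0 : (0:ℝ) ≤ (volume E).toReal := ENNReal.toReal_nonneg
    have hvS0 : (0:ℝ) ≤ (volume (Icc a b \ E)).toReal := ENNReal.toReal_nonneg
    have hφS : (0:ℝ) ≤ ∫ τ in Icc a b \ E, φ τ := by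
      rw [hφsplit, hEφ] at hφpos
      linarith
    rw [hFsplit, hEF]
    have hfinal : c x * (b - a) - ε * (b - a)
        ≤ c x * (volume E).toReal + ((∫ τ in Icc a b \ E, φ τ)
          - (M + ε) * (volume (Icc a b \ E)).toReal) := by
      have h6 : (c x - ε) * (volume (Icc a b \ E)).toReal
          ≤ -(M + ε) * (volume (Icc a b \ E)).toReal := by
        apply mul_le_mul_of_nonneg_right _ hvS0
        linarith
      have h7 : c x * (b - a)
          = c x * (volume E).toReal + c x * (volume (Icc a b \ E)).toReal := by
        rw [← hvolsum]
        ring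
      have h8 : ε * (volume (Icc a b \ E)).toReal ≤ ε * (b - a) :=
        mul_le_mul_of_nonneg_left (by linarith [hvolsum, hvE0]) hε.le
      nlinarith [h6, h7, h8, hφS]
    calc c x * (b - a) - ε * (b - a)
        ≤ c x * (volume E).toReal + ((∫ τ in Icc a b \ E, φ τ)
          - (M + ε) * (volume (Icc a b \ E)).toReal) := hfinal
      _ = c x * (volume E).toReal + ∫ τ in Icc a b \ E, (φ τ - (M + ε)) := by
          rw [hconstint]
      _ ≤ c x * (volume E).toReal + ∫ τ in Icc a b \ E, F τ := by linarith [hlowint]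
  -- conclude
  by_contra hcon
  push_neg at hcon
  set I : ℝ := ∫ τ in Icc a b, F τ with hIdef
  have hba : (0:ℝ) < b - a := by linarith
  have hεc : (0:ℝ) < (c x * (b - a) - I) / (2 * (b - a)) := by
    apply div_pos (by linarith) (by linarith)
  have := hmain _ hεc
  rw [div_mul_eq_mul_div] at this
  have h7 : (c x * (b - a) - I) / (2 * (b - a)) * (b - a) = (c x * (b - a) - I) / 2 := by
    field_simp
  rw [div_mul_eq_mul_div] at h7
  linarith [this, h7]
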